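/- arXiv:2504.03644 — 8 statements merged into one kernel-verified Lean document; each statement's English description precedes it below -/
import Mathlib

section
/- Let G be a finite simple graph with adjacency matrix A over ℂ, and let (θ_1, …, θ_K; E_1, …, E_K) be a spectral decomposition of A. Then for vertices u ≠ v and a real time t, G has quantum fractional revival from u to v at time t if and only if there exist complex numbers α and β with β ≠ 0 and |α|² + |β|² = 1 such that exp(i t θ_r)·(E_r e_u) = α·(E_r e_u) + β·(E_r e_v) for every r ∈ {1, …, K}. -/
open Matrix

/-- The standard basis vector `e_u` in `ℂ^V`. -/
noncomputable def stdVec {V : Type*} (u : V) : V → ℂ :=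
  letI := Classical.decEq V
  Pi.single u 1

/-- The transition matrix `H(t) = exp(i t A)` of a graph with adjacency matrix `A`. -/
noncomputable def transMatrix {V : Type*} [Fintype V] (A : Matrix V V ℂ) (t : ℝ) :
    Matrix V V ℂ :=
  letI := Classical.decEq V
  NormedSpace.exp ((Complex.I * (t : ℂ)) • A)

/-- Quantum fractional revival from `u` to `v` at time `t`. -/
def hasQFR {V : Type*} [Fintype V] (A : Matrix V V ℂ) (u v : V) (t : ℝ) : Prop :=
  u ≠ v ∧ ∃ α β : ℂ, β ≠ 0 ∧
    (transMatrix A t) *ᵥ stdVec u = α • stdVec u + β • stdVec v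

/-- The unitary Cayley graph of a commutative ring: distinct `a, b` are adjacent
iff `a - b` is a unit. -/
def unitaryCayleyGraph (R : Type*) [CommRing R] : SimpleGraph R where
  Adj a b := a ≠ b ∧ IsUnit (a - b)
  symm := ⟨by
    rintro a b ⟨h1, h2⟩
    refine ⟨h1.symm, ?_⟩
    rw [← neg_sub]
    exact h2.neg⟩
  loopless := ⟨fun a h => h.1 rfl⟩

/-- The adjacency matrix (over `ℂ`) of the unitary Cayley graph of `R`. -/
noncomputable def ucMatrix (R : Type*) [CommRing R] : Matrix R R ℂ :=
  letI := Classical.decEq R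
  letI := Classical.decRel (unitaryCayleyGraph R).Adj
  (unitaryCayleyGraph R).adjMatrix ℂ

/-- The adjacency matrix (over `ℂ`) of a simple graph. -/
noncomputable def adjMat {V : Type*} (G : SimpleGraph V) : Matrix V V ℂ :=
  letI := Classical.decEq V
  letI := Classical.decRel G.Adj
  G.adjMatrix ℂ

section Aux

variable {V : Type*} [Fintype V] [DecidableEq V] {K : ℕ}

/-- Multiplying two linear combinations of orthogonal idempotents. -/
lemma projSum_mul_projSum (a b : Fin K → ℂ) (E : Fin K → Matrix V V ℂ)
    (horth : ∀ r s, r ≠ s → E r * E s = 0)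
    (hidem : ∀ r, E r * E r = E r) :
    (∑ r, a r • E r) * (∑ r, b r • E r) = ∑ r, (a r * b r) • E r := by
  rw [Finset.sum_mul]
  refine Finset.sum_congr rfl fun r _ => ?_
  rw [Finset.mul_sum, Finset.sum_eq_single r]
  · rw [smul_mul_assoc, mul_smul_comm, hidem, smul_smul]
  · intro s _ hsr
    rw [smul_mul_assoc, mul_smul_comm, horth r s (Ne.symm hsr), smul_zero, smul_zero]
  · simp

lemma exp_projSum (μ : Fin K → ℂ) (E : Fin K → Matrix V V ℂ)
    (horth : ∀ r s, r ≠ s → E r * E s = 0)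
    (hidem : ∀ r, E r * E r = E r)
    (hsum : ∑ r, E r = (1 : Matrix V V ℂ)) :
    NormedSpace.exp (∑ r, μ r • E r) = ∑ r, Complex.exp (μ r) • E r := by
  letI : SeminormedRing (Matrix V V ℂ) := Matrix.linftyOpSemiNormedRing
  letI : NormedRing (Matrix V V ℂ) := Matrix.linftyOpNormedRing
  letI : NormedAlgebra ℂ (Matrix V V ℂ) := Matrix.linftyOpNormedAlgebra
  set M := ∑ r, μ r • E r with hM
  have hME : ∀ s, M * E s = μ s • E s := by
    intro s
    rw [hM, Finset.sum_mul, Finset.sum_eq_single s]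
    · rw [smul_mul_assoc, hidem]
    · intro r _ hrs; rw [smul_mul_assoc, horth r s hrs, smul_zero]
    · simp
  have hpow : ∀ (n : ℕ) (s : Fin K), M ^ n * E s = (μ s ^ n) • E s := by
    intro n s
    induction n with
    | zero => simp
    | succ n ih =>
        rw [pow_succ, mul_assoc, hME, mul_smul_comm, ih, smul_smul, pow_succ, mul_comm]
  have hexpE : ∀ s, NormedSpace.exp M * E s = Complex.exp (μ s) • E s := by
    intro s
    rw [NormedSpace.exp_eq_tsum ℂ]
    beta_reduce
    erw [← (NormedSpace.expSeries_summable' (𝕂 := ℂ) M).tsum_mul_right (E s)]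
    have h2 : ∀ n : ℕ, ((n.factorial : ℂ)⁻¹ • M ^ n) * E s = ((n.factorial : ℂ)⁻¹ * μ s ^ n) • E s := by
      intro n; rw [smul_mul_assoc, hpow, smul_smul]
    erw [tsum_congr h2, Summable.tsum_smul_const]
    · congr 1
      rw [Complex.exp_eq_exp_ℂ, NormedSpace.exp_eq_tsum ℂ]
      simp [smul_eq_mul]
    · exact NormedSpace.expSeries_summable' (𝕂 := ℂ) (μ s)
  calc NormedSpace.exp M = NormedSpace.exp M * ∑ r, E r := by rw [hsum, mul_one]
    _ = ∑ r, Complex.exp (μ r) • E r := by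
        rw [Finset.mul_sum]; exact Finset.sum_congr rfl fun r _ => hexpE r

end Aux

section Aux2

variable {V : Type*} [Fintype V] [DecidableEq V] {K : ℕ}

lemma sum_mulVec' (f : Fin K → Matrix V V ℂ) (x : V → ℂ) :
    (∑ r, f r) *ᵥ x = ∑ r, f r *ᵥ x := by
  ext i
  simp only [Matrix.mulVec, dotProduct, Finset.sum_apply, Matrix.sum_apply,
    Finset.sum_mul]
  rw [Finset.sum_comm]

lemma stdVec_eq (w : V) : stdVec w = Pi.single w (1 : ℂ) := by
  unfold stdVec
  congr!

lemma transMatrix_eq (A : Matrix V V ℂ) (t : ℝ) :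
    transMatrix A t = NormedSpace.exp ((Complex.I * (t : ℂ)) • A) := by
  unfold transMatrix
  congr!

lemma star_stdVec (w : V) : star (stdVec w) = stdVec w := by
  ext x
  simp [stdVec_eq, Pi.single_apply, apply_ite]

lemma stdVec_dot_self (w : V) : star (stdVec w) ⬝ᵥ stdVec w = 1 := by
  simp [star_stdVec, stdVec_eq, dotProduct, Pi.single_apply]

lemma stdVec_dot_ne {w w' : V} (h : w ≠ w') : star (stdVec w) ⬝ᵥ stdVec w' = 0 := by
  simp [star_stdVec, stdVec_eq, dotProduct, Pi.single_apply, h, Ne.symm h]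

end Aux2

/-- QFR at time `t` is equivalent to the eigenprojection condition
`exp(i t θ_r) (E_r e_u) = α (E_r e_u) + β (E_r e_v)` for all `r`. -/
theorem qfr_iff_projection_condition {V : Type*} [Fintype V] [DecidableEq V]
    (G : SimpleGraph V)
    (K : ℕ) (θ : Fin K → ℝ) (E : Fin K → Matrix V V ℂ)
    (hdist : Function.Injective θ)
    (hherm : ∀ r, (E r).IsHermitian)
    (horth : ∀ r s, r ≠ s → E r * E s = 0)
    (hidem : ∀ r, E r * E r = E r)
    (hsum : ∑ r, E r = (1 : Matrix V V ℂ))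
    (hspec : ∑ r, (θ r : ℂ) • E r = adjMat G)
    (u v : V) (huv : u ≠ v) (t : ℝ) :
    hasQFR (adjMat G) u v t ↔
      ∃ α β : ℂ, β ≠ 0 ∧ ‖α‖ ^ 2 + ‖β‖ ^ 2 = 1 ∧
        ∀ r, Complex.exp (Complex.I * (t : ℂ) * (θ r : ℂ)) • (E r *ᵥ stdVec u) =
          α • (E r *ᵥ stdVec u) + β • (E r *ᵥ stdVec v) := by
  set H := transMatrix (adjMat G) t with hHdef
  have hH : H = ∑ r, Complex.exp (Complex.I * (t : ℂ) * (θ r : ℂ)) • E r := by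
    rw [hHdef, transMatrix_eq]
    have harg : (Complex.I * (t : ℂ)) • adjMat G
        = ∑ r, (Complex.I * (t : ℂ) * (θ r : ℂ)) • E r := by
      rw [← hspec, Finset.smul_sum]
      exact Finset.sum_congr rfl fun r _ => smul_smul _ _ _
    rw [harg, exp_projSum _ E horth hidem hsum]
  have hHstar : Hᴴ = ∑ r, Complex.exp (-(Complex.I * (t : ℂ) * (θ r : ℂ))) • E r := by
    rw [hH, conjTranspose_sum]
    refine Finset.sum_congr rfl fun r _ => ?_
    rw [conjTranspose_smul, (hherm r).eq]
    congr 1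
    rw [Complex.star_def, ← Complex.exp_conj]
    congr 1
    simp only [map_neg, _root_.map_mul, Complex.conj_I, Complex.conj_ofReal]
    ring
  have hunit : Hᴴ * H = 1 := by
    rw [hHstar, hH, projSum_mul_projSum _ _ E horth hidem, ← hsum]
    refine Finset.sum_congr rfl fun r _ => ?_
    rw [← Complex.exp_add, neg_add_cancel, Complex.exp_zero, one_smul]
  have hEH : ∀ r, E r * H = Complex.exp (Complex.I * (t : ℂ) * (θ r : ℂ)) • E r := by
    intro r
    rw [hH, Finset.mul_sum, Finset.sum_eq_single r]
    · rw [mul_smul_comm, hidem]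
    · intro s _ hsr
      rw [mul_smul_comm, horth r s (Ne.symm hsr), smul_zero]
    · simp
  constructor
  · rintro ⟨-, α, β, hβ, heq⟩
    refine ⟨α, β, hβ, ?_, ?_⟩
    · -- norm condition
      have h1 : star (H *ᵥ stdVec u) ⬝ᵥ (H *ᵥ stdVec u) = 1 := by
        rw [star_mulVec, Matrix.dotProduct_mulVec, Matrix.vecMul_vecMul, hunit,
          Matrix.vecMul_one, stdVec_dot_self]
      rw [heq] at h1
      have h2 : (starRingEnd ℂ) α * α + (starRingEnd ℂ) β * β = 1 := by
        rw [star_add, star_smul, star_smul, add_dotProduct, smul_dotProduct,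
          smul_dotProduct, dotProduct_add, dotProduct_add] at h1
        simpa [dotProduct_smul, stdVec_dot_self, stdVec_dot_ne huv,
          stdVec_dot_ne (Ne.symm huv), smul_eq_mul, mul_one] using h1
      have h4 : ((Complex.normSq α + Complex.normSq β : ℝ) : ℂ) = 1 := by
        push_cast
        rw [Complex.normSq_eq_conj_mul_self, Complex.normSq_eq_conj_mul_self]
        exact h2
      have h5 : Complex.normSq α + Complex.normSq β = 1 := by exact_mod_cast h4
      rw [Complex.sq_norm, Complex.sq_norm]
      exact h5
    · intro r
      have h3 := congrArg (fun x => E r *ᵥ x) heq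
      simp only [Matrix.mulVec_mulVec, hEH r, Matrix.mulVec_add, Matrix.mulVec_smul] at h3
      rw [← hHdef, hEH r, Matrix.smul_mulVec] at h3
      exact h3
  · rintro ⟨α, β, hβ, -, hcond⟩
    refine ⟨huv, α, β, hβ, ?_⟩
    show H *ᵥ stdVec u = α • stdVec u + β • stdVec v
    rw [hH, sum_mulVec']
    have : ∀ r : Fin K, (Complex.exp (Complex.I * (t : ℂ) * (θ r : ℂ)) • E r) *ᵥ stdVec u
        = α • (E r *ᵥ stdVec u) + β • (E r *ᵥ stdVec v) := by
      intro r
      rw [Matrix.smul_mulVec]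
      exact hcond r
    rw [Finset.sum_congr rfl fun r _ => this r, Finset.sum_add_distrib,
      ← Finset.smul_sum, ← Finset.smul_sum, ← sum_mulVec', ← sum_mulVec', hsum,
      Matrix.one_mulVec, Matrix.one_mulVec]
end

section
/- Let R be a finite commutative local ring with identity. If quantum fractional revival occurs in the unitary Cayley graph G_R from a vertex u to a vertex v at some time, then for every spectral decomposition (θ_1, …, θ_K; E_1, …, E_K) of the adjacency matrix of G_R and every r ∈ {1, …, K}, either E_r e_v = E_r e_u or E_r e_v = −E_r e_u. -/
open Matrix

lemma proj_mul_exp {n : Type*} [Fintype n] [DecidableEq n]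
    (S P : Matrix n n ℂ) (c : ℂ) (hPS : P * S = c • P) :
    P * NormedSpace.exp S = Complex.exp c • P := by
  letI : SeminormedRing (Matrix n n ℂ) := Matrix.linftyOpSemiNormedRing
  letI : NormedRing (Matrix n n ℂ) := Matrix.linftyOpNormedRing
  letI : NormedAlgebra ℂ (Matrix n n ℂ) := Matrix.linftyOpNormedAlgebra
  have hpow : ∀ k : ℕ, P * S ^ k = c ^ k • P := by
    intro k
    induction k with
    | zero => simp
    | succ k ih =>
      rw [pow_succ, ← mul_assoc, ih, smul_mul_assoc, hPS, smul_smul, ← pow_succ]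
  have hsum : Summable fun k : ℕ => ((Nat.factorial k : ℂ)⁻¹) • S ^ k :=
    NormedSpace.expSeries_summable' (𝕂 := ℂ) S
  have hsc : Summable fun k : ℕ => ((Nat.factorial k : ℂ)⁻¹) * c ^ k := by
    simpa [smul_eq_mul] using NormedSpace.expSeries_summable' (𝕂 := ℂ) c
  have hmap := (ContinuousLinearMap.mul ℂ (Matrix n n ℂ) P).map_tsum hsum
  simp only [ContinuousLinearMap.mul_apply'] at hmap
  rw [NormedSpace.exp_eq_tsum (𝕂 := ℂ)]
  calc P * ∑' k : ℕ, ((Nat.factorial k : ℂ)⁻¹) • S ^ k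
      = ∑' k : ℕ, P * (((Nat.factorial k : ℂ)⁻¹) • S ^ k) := hmap
    _ = ∑' k : ℕ, (((Nat.factorial k : ℂ)⁻¹) * c ^ k) • P := by
        refine tsum_congr fun k => ?_
        rw [mul_smul_comm, hpow, smul_smul]
    _ = (∑' k : ℕ, ((Nat.factorial k : ℂ)⁻¹) * c ^ k) • P := hsc.tsum_smul_const P
    _ = Complex.exp c • P := by
        congr 1
        rw [Complex.exp_eq_exp_ℂ, NormedSpace.exp_eq_tsum (𝕂 := ℂ)]
        exact (tsum_congr fun k => by rw [smul_eq_mul]).symm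

lemma stdVec_apply {V : Type*} [DecidableEq V] (w a : V) :
    stdVec w a = if a = w then 1 else 0 := by
  unfold stdVec
  by_cases h : a = w
  · rw [if_pos h, h]
    convert Pi.single_eq_same (M := fun _ => ℂ) w (1 : ℂ)
  · rw [if_neg h]
    convert Pi.single_eq_of_ne (M := fun _ => ℂ) h (1 : ℂ)

/-- over a finite commutative local ring, QFR forces
`E_r e_v = ± E_r e_u` for every spectral projection. -/
theorem qfr_local_ring_plus_minus (R : Type*) [CommRing R] [IsLocalRing R]
    [Fintype R] [DecidableEq R]
    (u v : R) (t : ℝ) (h : hasQFR (ucMatrix R) u v t)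
    (K : ℕ) (θ : Fin K → ℝ) (E : Fin K → Matrix R R ℂ)
    (hdist : Function.Injective θ)
    (hherm : ∀ r, (E r).IsHermitian)
    (horth : ∀ r s, r ≠ s → E r * E s = 0)
    (hidem : ∀ r, E r * E r = E r)
    (hsum : ∑ r, E r = (1 : Matrix R R ℂ))
    (hspec : ∑ r, (θ r : ℂ) • E r = ucMatrix R) :
    ∀ r, E r *ᵥ stdVec v = E r *ᵥ stdVec u ∨
      E r *ᵥ stdVec v = -(E r *ᵥ stdVec u) := by
  obtain ⟨huv, α, β, hβ, heq⟩ := h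
  set A := ucMatrix R with hA
  -- eigen-equations
  have hEA : ∀ r, E r * A = (θ r : ℂ) • E r := by
    intro r
    rw [← hspec, Finset.mul_sum, Finset.sum_eq_single r]
    · rw [mul_smul_comm, hidem]
    · intro s _ hs
      rw [mul_smul_comm, horth r s (Ne.symm hs), smul_zero]
    · intro hr; exact absurd (Finset.mem_univ r) hr
  have hAE : ∀ r, A * E r = (θ r : ℂ) • E r := by
    intro r
    rw [← hspec, Finset.sum_mul, Finset.sum_eq_single r]
    · rw [smul_mul_assoc, hidem]
    · intro s _ hs
      rw [smul_mul_assoc, horth s r hs, smul_zero]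
    · intro hr; exact absurd (Finset.mem_univ r) hr
  -- the swap automorphism
  have hinv : Function.Involutive (fun a : R => u + v - a) := fun a => by ring
  set σ : Equiv.Perm R := hinv.toPerm _ with hσd
  have hσapp : ∀ a, σ a = u + v - a := fun a => rfl
  have hσσ : ∀ a : R, σ (σ a) = a := fun a => hinv a
  have hσu : σ u = v := by rw [hσapp]; ring
  have hσv : σ v = u := by rw [hσapp]; ring
  have hAσ : A.submatrix ⇑σ ⇑σ = A := by
    ext a b
    show ucMatrix R (σ a) (σ b) = ucMatrix R a b
    have hiff : (unitaryCayleyGraph R).Adj (σ a) (σ b) ↔ (unitaryCayleyGraph R).Adj a b := by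
      have e1 : σ a - σ b = -(a - b) := by rw [hσapp, hσapp]; ring
      constructor
      · rintro (⟨h1, h2⟩ : σ a ≠ σ b ∧ IsUnit (σ a - σ b))
        rw [e1] at h2
        exact ⟨fun hab => h1 (by rw [hab]), by simpa using h2.neg⟩
      · rintro (⟨h1, h2⟩ : a ≠ b ∧ IsUnit (a - b))
        refine ⟨fun hab => h1 (σ.injective hab), ?_⟩
        rw [e1]
        exact h2.neg
    unfold ucMatrix
    rw [SimpleGraph.adjMatrix_apply, SimpleGraph.adjMatrix_apply]
    by_cases hadj : (unitaryCayleyGraph R).Adj a b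
    · rw [if_pos (hiff.mpr hadj), if_pos hadj]
    · rw [if_neg (fun hc => hadj (hiff.mp hc)), if_neg hadj]
  -- E r is σ-invariant
  have hEσ : ∀ r, (E r).submatrix ⇑σ ⇑σ = E r := by
    intro r
    set F : Fin K → Matrix R R ℂ := fun s => (E s).submatrix ⇑σ ⇑σ with hF
    have hFA : ∀ s, F s * A = (θ s : ℂ) • F s := by
      intro s
      calc F s * A = (E s).submatrix ⇑σ ⇑σ * A.submatrix ⇑σ ⇑σ := by rw [hAσ]
        _ = (E s * A).submatrix ⇑σ ⇑σ := by rw [Matrix.submatrix_mul_equiv]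
        _ = ((θ s : ℂ) • E s).submatrix ⇑σ ⇑σ := by rw [hEA]
        _ = (θ s : ℂ) • F s := rfl
    have hθne : ∀ s s' : Fin K, s ≠ s' → ((θ s : ℂ) - (θ s' : ℂ)) ≠ 0 := by
      intro s s' hss hc
      rw [sub_eq_zero] at hc
      exact hss (hdist (by exact_mod_cast hc))
    have hFE0 : ∀ s s', s ≠ s' → F s * E s' = 0 := by
      intro s s' hss
      have h1 : F s * (A * E s') = (θ s' : ℂ) • (F s * E s') := by
        rw [hAE, mul_smul_comm]
      have h2 : F s * (A * E s') = (θ s : ℂ) • (F s * E s') := by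
        rw [← mul_assoc, hFA, smul_mul_assoc]
      have h3 : (((θ s : ℂ)) - (θ s' : ℂ)) • (F s * E s') = 0 := by
        rw [sub_smul, ← h2, h1, sub_self]
      rcases smul_eq_zero.mp h3 with hc | hc
      · exact absurd hc (hθne s s' hss)
      · exact hc
    have hFsum : ∑ s, F s = 1 := by
      have h1 : ∑ s, F s = (∑ s, E s).submatrix ⇑σ ⇑σ := by
        ext a b
        simp [hF, Matrix.sum_apply, Matrix.submatrix_apply]
      rw [h1, hsum, Matrix.submatrix_one_equiv]
    have key1 : E r = F r * E r := by
      calc E r = (∑ s, F s) * E r := by rw [hFsum, one_mul]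
        _ = ∑ s, F s * E r := Finset.sum_mul _ _ _
        _ = F r * E r := by
            rw [Finset.sum_eq_single r]
            · intro s _ hs; exact hFE0 s r hs
            · intro hr; exact absurd (Finset.mem_univ r) hr
    have key2 : F r = F r * E r := by
      calc F r = F r * (∑ s, E s) := by rw [hsum, mul_one]
        _ = ∑ s, F r * E s := Finset.mul_sum _ _ _
        _ = F r * E r := by
            rw [Finset.sum_eq_single r]
            · intro s _ hs; exact hFE0 r s (Ne.symm hs)
            · intro hr; exact absurd (Finset.mem_univ r) hr
    exact key2.trans key1.symm
  -- E r absorbs the transition matrix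
  have hEH : ∀ r, E r * transMatrix A t
      = Complex.exp (Complex.I * (t : ℂ) * (θ r : ℂ)) • E r := by
    intro r
    have hstep : E r * ((Complex.I * (t : ℂ)) • A)
        = (Complex.I * (t : ℂ) * (θ r : ℂ)) • E r := by
      rw [mul_smul_comm, hEA, smul_smul]
    exact @proj_mul_exp R _ (Classical.decEq R) ((Complex.I * (t : ℂ)) • A) (E r)
      (Complex.I * (t : ℂ) * (θ r : ℂ)) hstep
  -- stdVec transport
  have hstd : ∀ w a : R, stdVec w (σ a) = stdVec (σ w) a := by
    intro w a
    have hiff : σ a = w ↔ a = σ w := by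
      constructor
      · intro hh; rw [← hh, hσσ]
      · intro hh; rw [hh, hσσ]
    rw [stdVec_apply, stdVec_apply]
    by_cases hh : a = σ w
    · rw [if_pos hh, if_pos (hiff.mpr hh)]
    · rw [if_neg hh, if_neg (fun hc => hh (hiff.mp hc))]
  -- mulVec transport
  have hMσ : ∀ (M : Matrix R R ℂ), M.submatrix ⇑σ ⇑σ = M → ∀ (w : R → ℂ) (a : R),
      (M *ᵥ w) (σ a) = (M *ᵥ (fun b => w (σ b))) a := by
    intro M hM w a
    conv_rhs => rw [← hM]
    rw [Matrix.submatrix_mulVec_equiv]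
    simp only [Function.comp_apply]
    congr 1
    funext b
    congr 1
    show b = σ (σ.symm b)
    exact (σ.apply_symm_apply b).symm
  intro r
  set l := Complex.exp (Complex.I * (t : ℂ) * (θ r : ℂ)) with hl
  set x := E r *ᵥ stdVec u with hx
  set y := E r *ᵥ stdVec v with hy
  have eq1 : ∀ a, l * x a = α * x a + β * y a := by
    intro a
    have h1 : E r *ᵥ (transMatrix A t *ᵥ stdVec u) = l • x := by
      rw [Matrix.mulVec_mulVec, hEH r, Matrix.smul_mulVec]
    rw [heq, Matrix.mulVec_add, Matrix.mulVec_smul, Matrix.mulVec_smul] at h1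
    have := congrFun h1 a
    simpa using this.symm
  have hxσ : ∀ a, x (σ a) = y a := by
    intro a
    rw [hx, hMσ (E r) (hEσ r) (stdVec u) a]
    congr 1
    funext b
    rw [hstd u b, hσu]
  have hyσ : ∀ a, y (σ a) = x a := by
    intro a
    rw [hy, hMσ (E r) (hEσ r) (stdVec v) a]
    congr 1
    funext b
    rw [hstd v b, hσv]
  have eq2 : ∀ a, l * y a = α * y a + β * x a := by
    intro a
    have := eq1 (σ a)
    rwa [hxσ a, hyσ a] at this
  by_contra hcon
  push_neg at hcon
  obtain ⟨hne1, hne2⟩ := hcon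
  obtain ⟨a, ha⟩ : ∃ a, x a - y a ≠ 0 := by
    by_contra hc
    push_neg at hc
    exact hne1 (funext fun a => (sub_eq_zero.mp (hc a)).symm)
  obtain ⟨b, hb⟩ : ∃ b, x b + y b ≠ 0 := by
    by_contra hc
    push_neg at hc
    refine hne2 (funext fun b => ?_)
    show y b = -(x b)
    linear_combination hc b
  have hl1 : l = α - β := by
    have h1 : l * (x a - y a) = (α - β) * (x a - y a) := by
      linear_combination eq1 a - eq2 a
    exact mul_right_cancel₀ ha h1
  have hl2 : l = α + β := by
    have h1 : l * (x b + y b) = (α + β) * (x b + y b) := by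
      linear_combination eq1 b + eq2 b
    exact mul_right_cancel₀ hb h1
  exact hβ (by linear_combination (hl1 - hl2) / 2)
end

section
/- Let R be a finite commutative local ring with identity whose unique maximal ideal M has cardinality m. If quantum fractional revival occurs in the unitary Cayley graph G_R from some vertex to another at some time, then m = 1 or m = 2. -/
open Matrix

section AuxQFR
open NormedSpace

lemma exp_smul_idem {V : Type*} [Fintype V] [DecidableEq V] (Q : Matrix V V ℂ)
    (hQ : Q * Q = Q) (z : ℂ) :
    ∃ c : ℂ, exp (z • Q) = 1 + c • Q := by
  letI : SeminormedRing (Matrix V V ℂ) := Matrix.linftyOpSemiNormedRing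
  letI : NormedRing (Matrix V V ℂ) := Matrix.linftyOpNormedRing
  letI : NormedAlgebra ℂ (Matrix V V ℂ) := Matrix.linftyOpNormedAlgebra
  have hpow : ∀ n : ℕ, Q ^ (n + 1) = Q := by
    intro n
    induction n with
    | zero => simp
    | succ n ih => rw [pow_succ, ih, hQ]
  refine ⟨∑' n : ℕ, (((n+1).factorial : ℂ)⁻¹ * z ^ (n+1)), ?_⟩
  have hsummat : Summable (fun n : ℕ => ((n.factorial : ℂ))⁻¹ • (z • Q) ^ n) :=
    expSeries_summable' (𝕂 := ℂ) (z • Q)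
  have hsumsc : Summable (fun n : ℕ => (((n+1).factorial : ℂ))⁻¹ * z ^ (n+1)) := by
    have := expSeries_summable' (𝕂 := ℂ) z
    exact (by simpa [smul_eq_mul] using this : Summable fun n : ℕ => ((n.factorial : ℂ))⁻¹ * z ^ n).comp_injective (add_left_injective 1)
  rw [exp_eq_tsum (𝕂 := ℂ)]
  beta_reduce
  rw [Summable.tsum_eq_zero_add hsummat]
  have h0 : ((Nat.factorial 0 : ℂ))⁻¹ • (z • Q) ^ 0 = (1 : Matrix V V ℂ) := by simp
  have hterm : ∀ n : ℕ, (((n+1).factorial : ℂ))⁻¹ • (z • Q) ^ (n+1)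
      = ((((n+1).factorial : ℂ))⁻¹ * z ^ (n+1)) • Q := by
    intro n
    rw [smul_pow, hpow, smul_smul]
  rw [h0]
  congr 1
  rw [tsum_congr hterm, Summable.tsum_smul_const hsumsc]

lemma exp_smul_sq {V : Type*} [Fintype V] [DecidableEq V] (P : Matrix V V ℂ) (γ : ℂ)
    (hγ : γ ≠ 0) (hP : P * P = γ • P) (z : ℂ) :
    ∃ c : ℂ, exp (z • P) = 1 + c • P := by
  have hQ : (γ⁻¹ • P) * (γ⁻¹ • P) = γ⁻¹ • P := by
    rw [smul_mul_smul_comm, hP, smul_smul]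
    congr 1
    field_simp
  obtain ⟨c, hc⟩ := exp_smul_idem (γ⁻¹ • P) hQ (z * γ)
  refine ⟨c * γ⁻¹, ?_⟩
  rw [smul_smul, mul_assoc, mul_inv_cancel₀ hγ, mul_one] at hc
  rw [hc, smul_smul]

end AuxQFR

/-- if QFR occurs in the unitary Cayley graph of a finite local ring
whose maximal ideal has cardinality `m`, then `m = 1` or `m = 2`. -/
theorem qfr_local_ring_maximal_ideal_card (R : Type*) [CommRing R] [IsLocalRing R]
    [Fintype R] (m : ℕ)
    (hm : Nat.card (IsLocalRing.maximalIdeal R) = m)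
    (h : ∃ u v t, hasQFR (ucMatrix R) u v t) :
    m = 1 ∨ m = 2 := by
  classical
  obtain ⟨u, v, t, huv, α, β, hβ, heq⟩ := h
  by_contra hcon
  push_neg at hcon
  obtain ⟨hm1, hm2⟩ := hcon
  set M := IsLocalRing.maximalIdeal R with hMdef
  have h0M : (0 : R) ∈ M := zero_mem _
  have h1M : (1 : R) ∉ M := by
    intro h1
    exact (IsLocalRing.maximalIdeal.isMaximal R).ne_top (Ideal.eq_top_of_isUnit_mem _ h1 isUnit_one)
  have hmpos : 0 < m := by
    rw [← hm]
    exact Nat.card_pos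
  have hm3 : 3 ≤ m := by omega
  -- cardinality of cosets
  have key : ∀ b : R, (Finset.univ.filter fun x : R => x - b ∈ M).card = m := by
    intro b
    have e : {x : R // x - b ∈ M} ≃ M :=
      { toFun := fun x => ⟨x.1 - b, x.2⟩
        invFun := fun y => ⟨y.1 + b, by simpa using y.2⟩
        left_inv := fun x => by ext; simp
        right_inv := fun y => by ext; simp }
    calc (Finset.univ.filter fun x : R => x - b ∈ M).card
        = Fintype.card {x : R // x - b ∈ M} := (Fintype.card_subtype _).symm
      _ = Fintype.card M := Fintype.card_congr e
      _ = Nat.card M := (Nat.card_eq_fintype_card).symm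
      _ = m := hm
  -- the matrices J and K
  set J : Matrix R R ℂ := Matrix.of fun _ _ => 1 with hJdef
  set K : Matrix R R ℂ := Matrix.of fun a b => if a - b ∈ M then 1 else 0 with hKdef
  have hA : ucMatrix R = J - K := by
    ext a b
    simp only [ucMatrix, SimpleGraph.adjMatrix_apply]
    simp only [ucMatrix, SimpleGraph.adjMatrix_apply, unitaryCayleyGraph, hJdef, hKdef,
      Matrix.sub_apply, Matrix.of_apply]
    by_cases hab : a - b ∈ M
    · have hnu : ¬ IsUnit (a - b) := by
        intro hu
        exact (IsLocalRing.maximalIdeal.isMaximal R).ne_top (Ideal.eq_top_of_isUnit_mem _ hab hu)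
      simp only [if_neg (show ¬(a ≠ b ∧ IsUnit (a - b)) by tauto), if_pos hab]
      norm_num
      simp [hnu]
    · have hu : IsUnit (a - b) := by
        by_contra hnu
        exact hab (IsLocalRing.mem_maximalIdeal _ |>.mpr hnu)
      have hne : a ≠ b := by
        intro hab'
        apply hab
        simp [hab']
      simp only [if_pos (show a ≠ b ∧ IsUnit (a - b) from ⟨hne, hu⟩), if_neg hab]
      norm_num
      simp [hne, hu]
  -- sums of indicator rows/columns
  have sumcol : ∀ b : R, (∑ x : R, (if x - b ∈ M then (1:ℂ) else 0)) = (m : ℂ) := by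
    intro b
    rw [Finset.sum_boole, key b]
  have sumrow : ∀ a : R, (∑ x : R, (if a - x ∈ M then (1:ℂ) else 0)) = (m : ℂ) := by
    intro a
    have : ∀ x : R, (if a - x ∈ M then (1:ℂ) else 0) = (if x - a ∈ M then (1:ℂ) else 0) := by
      intro x
      have : a - x ∈ M ↔ x - a ∈ M := by
        constructor
        · intro hx; simpa using neg_mem hx
        · intro hx; simpa using neg_mem hx
      simp [this]
    rw [Finset.sum_congr rfl fun x _ => this x, sumcol a]
  -- products
  have hJJ : J * J = ((Fintype.card R : ℂ)) • J := by
    ext a b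
    simp [hJdef, Matrix.mul_apply]
  have hJK : J * K = (m : ℂ) • J := by
    ext a b
    simp only [hJdef, hKdef, Matrix.mul_apply, Matrix.of_apply, Matrix.smul_apply, one_mul,
      smul_eq_mul, mul_one]
    exact sumcol b
  have hKJ : K * J = (m : ℂ) • J := by
    ext a b
    simp only [hJdef, hKdef, Matrix.mul_apply, Matrix.of_apply, Matrix.smul_apply, mul_one,
      smul_eq_mul]
    exact sumrow a
  have hKK : K * K = (m : ℂ) • K := by
    ext a b
    simp only [hKdef, Matrix.mul_apply, Matrix.of_apply, Matrix.smul_apply, smul_eq_mul]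
    by_cases hab : a - b ∈ M
    · have hx : ∀ x : R, (if a - x ∈ M then (1:ℂ) else 0) * (if x - b ∈ M then 1 else 0)
          = (if x - b ∈ M then (1:ℂ) else 0) := by
        intro x
        by_cases hxb : x - b ∈ M
        · have : a - x ∈ M := by
            have := sub_mem hab hxb
            simpa using this
          simp [this, hxb]
        · simp [hxb]
      rw [Finset.sum_congr rfl fun x _ => hx x, sumcol b, if_pos hab, mul_one]
    · have hx : ∀ x : R, (if a - x ∈ M then (1:ℂ) else 0) * (if x - b ∈ M then 1 else 0)
          = 0 := by
        intro x
        by_cases hax : a - x ∈ M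
        · have hxb : x - b ∉ M := by
            intro hxb
            apply hab
            have := add_mem hax hxb
            simpa using this
          simp [hxb]
        · simp [hax]
      rw [Finset.sum_congr rfl fun x _ => hx x, if_neg hab]
      simp
  -- the transition matrix
  set s : ℂ := Complex.I * (t : ℂ) with hsdef
  have hnR : ((Fintype.card R : ℂ)) ≠ 0 := by
    simpa using Fintype.card_ne_zero (α := R)
  have hmC : ((m : ℂ)) ≠ 0 := by
    simpa using hmpos.ne'
  obtain ⟨c, hc⟩ := exp_smul_sq J _ hnR hJJ s
  obtain ⟨d, hd⟩ := exp_smul_sq K _ hmC hKK (-s)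
  have hcomm : Commute (s • J) ((-s) • K) := by
    show _ = _
    rw [smul_mul_smul_comm, smul_mul_smul_comm, hJK, hKJ, mul_comm]
  have hsplit : s • (J - K) = s • J + (-s) • K := by
    rw [smul_sub, sub_eq_add_neg, neg_smul]
  have hH : transMatrix (ucMatrix R) t = (1 + c • J) * (1 + d • K) := by
    unfold transMatrix
    rw [hA, ← hsdef, hsplit, Matrix.exp_add_of_commute _ _ hcomm, hc, hd]
  have hprod : (1 + c • J) * (1 + d • K) = 1 + (c + c * d * (m:ℂ)) • J + d • K := by
    rw [mul_add, mul_one, add_mul, one_mul, smul_mul_smul_comm, hJK, smul_smul, add_smul]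
    module
  set E : ℂ := c + c * d * (m:ℂ) with hEdef
  have entry : ∀ w : R, transMatrix (ucMatrix R) t w u
      = (if w = u then (1:ℂ) else 0) + E + d * (if w - u ∈ M then 1 else 0) := by
    intro w
    rw [hH, hprod]
    simp only [Matrix.add_apply, Matrix.smul_apply, Matrix.one_apply, hJdef, hKdef,
      Matrix.of_apply, smul_eq_mul, mul_one, hEdef]
  have happ : ∀ w : R, transMatrix (ucMatrix R) t w u
      = α * (if w = u then 1 else 0) + β * (if w = v then 1 else 0) := by
    intro w
    have h1 := congrFun heq w
    simpa [stdVec, Matrix.mulVec_single, Pi.single_apply] using h1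
  -- choose w1 in the coset of u, distinct from u and v
  have hcard2 : ({u, v} : Finset R).card ≤ 2 := by
    apply le_trans (Finset.card_insert_le _ _)
    simp
  have hnon : ((Finset.univ.filter fun x : R => x - u ∈ M) \ {u, v}).Nonempty := by
    rw [← Finset.card_pos]
    have h1 := Finset.le_card_sdiff ({u, v} : Finset R)
      (Finset.univ.filter fun x : R => x - u ∈ M)
    have h2 := key u
    omega
  obtain ⟨w1, hw1⟩ := hnon
  rw [Finset.mem_sdiff, Finset.mem_filter] at hw1
  obtain ⟨⟨-, hw1M⟩, hw1nm⟩ := hw1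
  have hw1u : ¬ (w1 = u) := fun hq => hw1nm (by simp [hq])
  have hw1v : ¬ (w1 = v) := fun hq => hw1nm (by simp [hq])
  -- choose w2 outside the coset of u, distinct from u and v
  obtain ⟨w2, hw2M, hw2u, hw2v⟩ : ∃ w2 : R, w2 - u ∉ M ∧ ¬ (w2 = u) ∧ ¬ (w2 = v) := by
    by_cases hc1 : u + 1 = v
    · have hnM : w1 + 1 - u ∉ M := by
        intro hmem
        apply h1M
        have h2 : (w1 + 1 - u) - (w1 - u) ∈ M := sub_mem hmem hw1M
        simpa using h2
      refine ⟨w1 + 1, hnM, ?_, ?_⟩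
      · intro hq
        apply hnM
        rw [hq]
        simpa using h0M
      · intro hq
        rw [← hc1] at hq
        exact hw1u (add_right_cancel hq)
    · refine ⟨u + 1, ?_, ?_, hc1⟩
      · simpa using h1M
      · simp
  -- the three equations
  have h1 := (entry w1).symm.trans (happ w1)
  rw [if_neg hw1u, if_pos hw1M, if_neg hw1v] at h1
  have h2 := (entry w2).symm.trans (happ w2)
  rw [if_neg hw2u, if_neg hw2M, if_neg hw2v] at h2
  have hv := (entry v).symm.trans (happ v)
  rw [if_neg (show ¬ (v = u) from fun hq => huv hq.symm), if_pos rfl] at hv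
  have hE : E = 0 := by linear_combination h2
  have hd0 : d = 0 := by linear_combination h1 - h2
  apply hβ
  by_cases hvm : v - u ∈ M
  · rw [if_pos hvm] at hv
    linear_combination -hv + hE + hd0
  · rw [if_neg hvm] at hv
    linear_combination -hv + hE
end

section
/- Let F be a finite field. Quantum fractional revival occurs in the unitary Cayley graph G_F (from some vertex to another at some time) if and only if F has exactly 2 elements. -/
open Matrix

lemma ucMatrix_field_apply (F : Type*) [Field F] (a b : F) [Decidable (a = b)] :
    ucMatrix F a b = if a = b then 0 else 1 := by
  unfold ucMatrix
  rw [SimpleGraph.adjMatrix_apply]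
  by_cases h : a = b
  · simp [unitaryCayleyGraph, h]
  · simp [unitaryCayleyGraph, h, isUnit_iff_ne_zero, sub_ne_zero.mpr h]

lemma exp_submatrix_perm {m : Type*} [Fintype m] [DecidableEq m] (σ : Equiv.Perm m)
    (A : Matrix m m ℂ) :
    (NormedSpace.exp A).submatrix σ σ = NormedSpace.exp (A.submatrix σ σ) := by
  letI : SeminormedRing (Matrix m m ℂ) := Matrix.linftyOpSemiNormedRing
  letI : NormedRing (Matrix m m ℂ) := Matrix.linftyOpNormedRing
  letI : NormedAlgebra ℂ (Matrix m m ℂ) := Matrix.linftyOpNormedAlgebra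
  letI : NormedAlgebra ℚ (Matrix m m ℂ) := Matrix.linftyOpNormedAlgebra
  have hc : Continuous (Matrix.reindexAlgEquiv ℂ ℂ σ.symm : Matrix m m ℂ ≃ₐ[ℂ] Matrix m m ℂ) :=
    continuous_id.matrix_submatrix σ σ
  have := NormedSpace.map_exp (Matrix.reindexAlgEquiv ℂ ℂ σ.symm) hc A
  simp only [Matrix.reindexAlgEquiv_apply, Matrix.reindex_apply, Equiv.symm_symm] at this
  exact this

/-- The algebra homomorphism `ℂ × ℂ → Matrix V V ℂ` associated to a square root `A` of `1`. -/
noncomputable def pairHom {V : Type*} [Fintype V] [DecidableEq V] (A : Matrix V V ℂ)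
    (hA : A * A = 1) : (ℂ × ℂ) →ₐ[ℂ] Matrix V V ℂ where
  toFun p := ((p.1 + p.2) / 2) • (1 : Matrix V V ℂ) + ((p.1 - p.2) / 2) • A
  map_one' := by norm_num
  map_mul' p q := by
    simp only [Prod.fst_mul, Prod.snd_mul]
    rw [add_mul, mul_add, mul_add, smul_mul_smul_comm, smul_mul_smul_comm,
      smul_mul_smul_comm, smul_mul_smul_comm, hA, one_mul, mul_one, one_mul]
    module
  map_zero' := by norm_num
  map_add' p q := by
    simp only [Prod.fst_add, Prod.snd_add]
    module
  commutes' r := by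
    simp only [Algebra.algebraMap_eq_smul_one, Prod.smul_fst, Prod.smul_snd, Prod.fst_one,
      Prod.snd_one, smul_eq_mul, mul_one]
    module

lemma pairHom_continuous {V : Type*} [Fintype V] [DecidableEq V] (A : Matrix V V ℂ)
    (hA : A * A = 1) : Continuous (pairHom A hA) :=
  (((continuous_fst.add continuous_snd).div_const 2).smul continuous_const).add
    (((continuous_fst.sub continuous_snd).div_const 2).smul continuous_const)

lemma exp_smul_of_sq_one {V : Type*} [Fintype V] [DecidableEq V] (A : Matrix V V ℂ)
    (hA : A * A = 1) (z : ℂ) :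
    NormedSpace.exp (z • A) =
      ((Complex.exp z + Complex.exp (-z)) / 2) • (1 : Matrix V V ℂ) +
        ((Complex.exp z - Complex.exp (-z)) / 2) • A := by
  letI : SeminormedRing (Matrix V V ℂ) := Matrix.linftyOpSemiNormedRing
  letI : NormedRing (Matrix V V ℂ) := Matrix.linftyOpNormedRing
  letI : NormedAlgebra ℂ (Matrix V V ℂ) := Matrix.linftyOpNormedAlgebra
  letI : NormedAlgebra ℚ (Matrix V V ℂ) := Matrix.linftyOpNormedAlgebra
  have h1 : z • A = pairHom A hA (z, -z) := by
    show z • A = ((z + -z) / 2) • (1 : Matrix V V ℂ) + ((z - -z) / 2) • A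
    rw [show (z + -z) / 2 = 0 by ring, show (z - -z) / 2 = z by ring]
    simp
  have h2 : NormedSpace.exp ((z, -z) : ℂ × ℂ) = (Complex.exp z, Complex.exp (-z)) := by
    have hf := Prod.fst_exp ((z, -z) : ℂ × ℂ)
    have hs := Prod.snd_exp ((z, -z) : ℂ × ℂ)
    rw [← Complex.exp_eq_exp_ℂ] at hf hs
    exact Prod.ext hf hs
  rw [h1]
  erw [← NormedSpace.map_exp (pairHom A hA) (pairHom_continuous A hA), h2]
  rfl

/-- for a finite field `F`, QFR occurs in `G_F` iff `|F| = 2`. -/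
theorem qfr_finite_field_iff_card_two (F : Type*) [Field F] [Fintype F] :
    (∃ u v t, hasQFR (ucMatrix F) u v t) ↔ Fintype.card F = 2 := by
  classical
  constructor
  · rintro ⟨u, v, t, hne, α, β, hβ, heq⟩
    by_contra hcard
    have h2 : 2 < Fintype.card F := by
      have h1 : 1 < Fintype.card F := Fintype.one_lt_card
      omega
    obtain ⟨w, hwu, hwv⟩ : ∃ w : F, w ≠ u ∧ w ≠ v := by
      by_contra h
      push_neg at h
      have hsub : (Finset.univ : Finset F) ⊆ {u, v} := by
        intro x _
        rcases eq_or_ne x u with rfl | h'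
        · simp
        · simp [h x h']
      have := Finset.card_le_card hsub
      have hle : ({u, v} : Finset F).card ≤ 2 := Finset.card_insert_le _ _ |>.trans (by simp)
      rw [Finset.card_univ] at this
      omega
    have hAsub : (ucMatrix F).submatrix (Equiv.swap v w) (Equiv.swap v w) = ucMatrix F := by
      ext a b
      rw [Matrix.submatrix_apply, ucMatrix_field_apply, ucMatrix_field_apply,
        EmbeddingLike.apply_eq_iff_eq]
    have hkey : (transMatrix (ucMatrix F) t).submatrix (Equiv.swap v w) (Equiv.swap v w) =
        transMatrix (ucMatrix F) t := by
      unfold transMatrix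
      rw [exp_submatrix_perm]
      congr 1
      ext a b
      rw [Matrix.submatrix_apply, Matrix.smul_apply, Matrix.smul_apply]
      congr 1
      have := congrFun (congrFun hAsub a) b
      rwa [Matrix.submatrix_apply] at this
    have hH : ∀ a b : F, transMatrix (ucMatrix F) t (Equiv.swap v w a) (Equiv.swap v w b) =
        transMatrix (ucMatrix F) t a b := by
      intro a b
      have := congrFun (congrFun hkey a) b
      rwa [Matrix.submatrix_apply] at this
    have hcoord : ∀ x : F, transMatrix (ucMatrix F) t x u =
        α * (if x = u then 1 else 0) + β * (if x = v then 1 else 0) := by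
      intro x
      have := congrFun heq x
      simpa [Matrix.mulVec, dotProduct, stdVec, Pi.single_apply, mul_ite, mul_one, mul_zero,
        Finset.sum_ite_eq', smul_eq_mul] using this
    have hwcoord : transMatrix (ucMatrix F) t w u = 0 := by
      rw [hcoord w]; simp [hwu, hwv]
    have hvcoord : transMatrix (ucMatrix F) t v u = β := by
      rw [hcoord v]; simp [hne.symm]
    have hswap : transMatrix (ucMatrix F) t v u = transMatrix (ucMatrix F) t w u := by
      have := hH w u
      rwa [Equiv.swap_apply_right, Equiv.swap_apply_of_ne_of_ne hne hwu.symm] at this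
    exact hβ (by rw [← hvcoord, hswap, hwcoord])
  · intro hcard
    have hne : (0 : F) ≠ 1 := zero_ne_one
    have huniv : ∀ x : F, x = 0 ∨ x = 1 := by
      intro x
      have hU : ({0, 1} : Finset F) = Finset.univ := by
        apply Finset.eq_univ_of_card
        rw [hcard, Finset.card_insert_of_notMem (by simp [hne]), Finset.card_singleton]
      have : x ∈ ({0, 1} : Finset F) := hU ▸ Finset.mem_univ x
      simpa using this
    have hunivF : (Finset.univ : Finset F) = {0, 1} := by
      symm
      apply Finset.eq_univ_of_card
      rw [hcard, Finset.card_insert_of_notMem (by simp [hne]), Finset.card_singleton]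
    have hA2 : ucMatrix F * ucMatrix F = 1 := by
      ext a b
      rw [Matrix.mul_apply]
      rw [show (Finset.univ : Finset F) = {0, 1} from hunivF,
        Finset.sum_pair hne]
      rcases huniv a with rfl | rfl <;> rcases huniv b with rfl | rfl <;>
        simp [ucMatrix_field_apply, hne, hne.symm, Matrix.one_apply]
    refine ⟨0, 1, Real.pi / 2, hne, 0, Complex.I, Complex.I_ne_zero, ?_⟩
    have hexp : transMatrix (ucMatrix F) (Real.pi / 2) = Complex.I • ucMatrix F := by
      unfold transMatrix
      rw [exp_smul_of_sq_one (ucMatrix F) hA2]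
      have he1 : Complex.exp (Complex.I * ((Real.pi / 2 : ℝ) : ℂ)) = Complex.I := by
        rw [mul_comm, Complex.exp_mul_I, ← Complex.ofReal_cos, ← Complex.ofReal_sin,
          Real.cos_pi_div_two, Real.sin_pi_div_two]
        simp
      have he2 : Complex.exp (-(Complex.I * ((Real.pi / 2 : ℝ) : ℂ))) = -Complex.I := by
        rw [Complex.exp_neg, he1, Complex.inv_I]
      rw [he1, he2]
      rw [show (Complex.I + -Complex.I) / 2 = 0 by ring,
        show (Complex.I - -Complex.I) / 2 = Complex.I by ring]
      simp
    rw [hexp]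
    funext x
    have hmv : ((Complex.I • ucMatrix F) *ᵥ stdVec (0 : F)) x = Complex.I * ucMatrix F x 0 := by
      simp [Matrix.mulVec, dotProduct, stdVec, Pi.single_apply, mul_ite, mul_one, mul_zero,
        Finset.sum_ite_eq', smul_eq_mul, Matrix.smul_apply, Finset.mul_sum]
    rw [hmv]
    rcases huniv x with rfl | rfl <;>
      simp [ucMatrix_field_apply, stdVec, Pi.single_apply, hne, hne.symm]
end

section
/- Let R be a finite commutative ring with identity. If quantum fractional revival occurs in the unitary Cayley graph G_R from some vertex to another at some time, then the cardinality of R is even. -/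
open Matrix

section Aux

lemma exp_submatrix {R : Type*} [Fintype R] [DecidableEq R] (e : R ≃ R) (A : Matrix R R ℂ) :
    (NormedSpace.exp A).submatrix e e = NormedSpace.exp (A.submatrix e e) := by
  letI : SeminormedRing (Matrix R R ℂ) := Matrix.linftyOpSemiNormedRing
  letI : NormedRing (Matrix R R ℂ) := Matrix.linftyOpNormedRing
  letI : NormedAlgebra ℂ (Matrix R R ℂ) := Matrix.linftyOpNormedAlgebra
  letI : NormedAlgebra ℚ (Matrix R R ℂ) := Matrix.linftyOpNormedAlgebra
  have hcont : Continuous (reindexAlgEquiv ℂ ℂ e.symm : Matrix R R ℂ →+* Matrix R R ℂ) := by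
    convert (continuous_id.matrix_submatrix (X := Matrix R R ℂ) (R := ℂ) e e) using 1
    ext M : 1
    simp [reindexAlgEquiv_apply, Matrix.reindex_apply]
  have := NormedSpace.map_exp
    ((reindexAlgEquiv ℂ ℂ e.symm : Matrix R R ℂ ≃ₐ[ℂ] Matrix R R ℂ) : Matrix R R ℂ →+* Matrix R R ℂ)
    hcont A
  simp only [reindexAlgEquiv_apply, Matrix.reindex_apply, Equiv.symm_symm, RingHom.coe_coe] at this
  exact this

end Aux

section Aux2

variable (R : Type*) [CommRing R] [Fintype R]

lemma ucMatrix_symm : (ucMatrix R).IsSymm := by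
  classical
  unfold ucMatrix
  ext x y
  simp only [Matrix.transpose_apply, SimpleGraph.adjMatrix_apply]
  exact if_congr ⟨fun h => h.symm, fun h => h.symm⟩ rfl rfl

lemma ucMatrix_shift (c x y : R) : ucMatrix R (x + c) (y + c) = ucMatrix R x y := by
  classical
  unfold ucMatrix
  simp only [SimpleGraph.adjMatrix_apply]
  refine if_congr ?_ rfl rfl
  simp [unitaryCayleyGraph, add_sub_add_right_eq_sub]

lemma trans_symm (t : ℝ) : (transMatrix (ucMatrix R) t).IsSymm := by
  letI := Classical.decEq R
  unfold transMatrix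
  exact Matrix.IsSymm.exp (by
    unfold Matrix.IsSymm
    rw [Matrix.transpose_smul, (ucMatrix_symm R)])

lemma trans_shift (t : ℝ) (c x y : R) :
    transMatrix (ucMatrix R) t (x + c) (y + c) = transMatrix (ucMatrix R) t x y := by
  letI := Classical.decEq R
  have hA : (ucMatrix R).submatrix (Equiv.addRight c) (Equiv.addRight c) = ucMatrix R := by
    ext i j
    simpa using ucMatrix_shift R c i j
  have hA' : (((Complex.I * (t : ℂ)) • ucMatrix R).submatrix (Equiv.addRight c)
      (Equiv.addRight c)) = (Complex.I * (t : ℂ)) • ucMatrix R := by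
    ext i j
    simpa using congr_arg (fun z => (Complex.I * (t : ℂ)) * z) (ucMatrix_shift R c i j)
  have key : (transMatrix (ucMatrix R) t).submatrix (Equiv.addRight c) (Equiv.addRight c)
      = transMatrix (ucMatrix R) t := by
    unfold transMatrix
    rw [exp_submatrix, hA']
  simpa using congrFun (congrFun key x) y

end Aux2

/-- if QFR occurs in the unitary Cayley graph of a finite commutative ring
`R`, then `|R|` is even. -/
theorem qfr_card_even (R : Type*) [CommRing R] [Fintype R]
    (h : ∃ u v t, hasQFR (ucMatrix R) u v t) :
    Even (Fintype.card R) := by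
  classical
  obtain ⟨u, v, t, huv, α, β, hβ, heq⟩ := h
  set H := transMatrix (ucMatrix R) t with hH
  have hEntry : ∀ w : R, H w u =
      α * (if w = u then 1 else 0) + β * (if w = v then 1 else 0) := by
    intro w
    have h1 := congrFun heq w
    simpa [Matrix.mulVec, dotProduct, stdVec, Pi.single_apply, mul_ite,
      Finset.sum_ite_eq'] using h1
  set c : R := u - v with hc
  -- H u v = β
  have hvu : H v u = β := by
    rw [hEntry v, if_neg (Ne.symm huv), if_pos rfl]
    ring
  have huv' : H u v = β := by
    rw [hH, (trans_symm R t).apply v u, ← hH, hvu]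
  -- translation
  have htr : H (u + c) u = β := by
    have : H (u + c) (v + c) = H u v := by
      rw [hH]; exact trans_shift R t c u v
    rw [show v + c = u by rw [hc]; ring] at this
    rw [this, huv']
  by_cases h1 : u + c = v
  · -- c + c = 0, c ≠ 0
    have hcc : c + c = 0 := by rw [hc] at h1 ⊢; linear_combination h1
    have hc0 : c ≠ 0 := sub_ne_zero.mpr huv
    have h2c : (2 : ℕ) • c = 0 := by rw [two_nsmul]; exact hcc
    have hdvd : addOrderOf c ∣ 2 := addOrderOf_dvd_of_nsmul_eq_zero h2c
    have hne1 : addOrderOf c ≠ 1 := fun hh => hc0 (AddMonoid.addOrderOf_eq_one_iff.mp hh)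
    have h2 : addOrderOf c = 2 :=
      ((Nat.prime_two.eq_one_or_self_of_dvd _ hdvd)).resolve_left hne1
    exact even_iff_two_dvd.mpr (h2 ▸ addOrderOf_dvd_card)
  · exfalso
    have h2 : u + c ≠ u := by
      intro hh
      exact huv (by rw [hc] at hh; linear_combination hh)
    rw [hEntry (u + c), if_neg h2, if_neg h1] at htr
    simp at htr
    exact hβ htr.symm
end

section
/- Let F be a finite field of odd cardinality q. Then for every integer k, the unitary Cayley graph of the product ring F × ℤ/4ℤ does not have quantum fractional revival from any vertex u to any vertex v at time τ = kπ/q. -/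
open Matrix

/-! ### Auxiliary material -/

section Aux

open Kronecker

/-- exp of a spectral decomposition. -/
theorem qfr_exp_proj {V ι : Type*} [Fintype V] [DecidableEq V] [Fintype ι] [DecidableEq ι]
    (P : ι → Matrix V V ℂ) (lam : ι → ℂ) (A : Matrix V V ℂ)
    (hP : ∀ j l, P j * P l = if j = l then P j else 0)
    (hI : ∑ j, P j = 1) (hA : A = ∑ j, lam j • P j) :
    NormedSpace.exp A = ∑ j, Complex.exp (lam j) • P j := by
  letI : SeminormedRing (Matrix V V ℂ) := Matrix.linftyOpSemiNormedRing
  letI : NormedRing (Matrix V V ℂ) := Matrix.linftyOpNormedRing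
  letI : NormedAlgebra ℂ (Matrix V V ℂ) := Matrix.linftyOpNormedAlgebra
  have hpow : ∀ n : ℕ, A ^ n = ∑ j, (lam j) ^ n • P j := by
    intro n
    induction n with
    | zero => simpa using hI.symm
    | succ n ih =>
      rw [pow_succ, ih, hA, Finset.sum_mul_sum]
      rw [Finset.sum_comm]
      refine Finset.sum_congr rfl fun l _ => ?_
      rw [Finset.sum_eq_single l]
      · rw [smul_mul_smul_comm, hP, if_pos rfl, pow_succ, mul_comm (lam l ^ n)]
      · intro j _ hjl
        rw [smul_mul_smul_comm, hP, if_neg hjl, smul_zero]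
      · intro h; exact absurd (Finset.mem_univ l) h
  rw [NormedSpace.exp_eq_tsum ℂ]
  have key : ∀ n : ℕ, ((n.factorial : ℂ)⁻¹ • A ^ n) =
      ∑ j, ((n.factorial : ℂ)⁻¹ * lam j ^ n) • P j := by
    intro n
    rw [hpow, Finset.smul_sum]
    exact Finset.sum_congr rfl fun j _ => (smul_smul _ _ _)
  have hsc : ∀ j : ι, Summable fun n : ℕ => (n.factorial : ℂ)⁻¹ * lam j ^ n := fun j => by
    simpa [smul_eq_mul] using NormedSpace.expSeries_summable' (𝕂 := ℂ) (lam j)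
  simp_rw [key]
  rw [Summable.tsum_finsetSum (fun j _ => ((hsc j).smul_const (P j)))]
  refine Finset.sum_congr rfl fun j _ => ?_
  rw [Summable.tsum_smul_const (hsc j)]
  congr 1
  rw [Complex.exp_eq_exp_ℂ, NormedSpace.exp_eq_tsum ℂ]
  simp [smul_eq_mul]

/-- Integer versions of the `ZMod 4` projections (scaled by 4). -/
def qfrNz : Fin 3 → Matrix (ZMod 4) (ZMod 4) ℤ
  | 0 => Matrix.of fun _ _ => 1
  | 1 => Matrix.of fun a b => if a - b = 0 then 2 else if a - b = 2 then -2 else 0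
  | 2 => Matrix.of fun a b => if a - b = 1 ∨ a - b = 3 then -1 else 1

/-- adjacency matrix of the 4-cycle over ℤ. -/
def qfrCz : Matrix (ZMod 4) (ZMod 4) ℤ :=
  Matrix.of fun a b => if a - b = 1 ∨ a - b = 3 then 1 else 0

lemma qfrNz_mul : ∀ j m : Fin 3, qfrNz j * qfrNz m = if j = m then (4:ℤ) • qfrNz j else 0 := by
  decide

lemma qfrNz_sum : qfrNz 0 + qfrNz 1 + qfrNz 2 = (4:ℤ) • 1 := by decide

lemma qfrNz_comb : (2:ℤ) • qfrNz 0 + (0:ℤ) • qfrNz 1 + (-2:ℤ) • qfrNz 2 = (4:ℤ) • qfrCz := by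
  decide

/-- Complex projections on `ZMod 4`. -/
noncomputable def qfrPz (j : Fin 3) : Matrix (ZMod 4) (ZMod 4) ℂ :=
  (4:ℂ)⁻¹ • (qfrNz j).map (Int.castRingHom ℂ)

noncomputable def qfrCc : Matrix (ZMod 4) (ZMod 4) ℂ := qfrCz.map (Int.castRingHom ℂ)

lemma qfr_map_smul (c : ℤ) (M : Matrix (ZMod 4) (ZMod 4) ℤ) :
    (c • M).map (Int.castRingHom ℂ) = (c : ℂ) • M.map (Int.castRingHom ℂ) := by
  ext a b
  simp only [Matrix.map_apply, Matrix.smul_apply, smul_eq_mul, _root_.map_mul,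
    Int.coe_castRingHom]
  push_cast
  ring

lemma qfrPz_mul (j m : Fin 3) : qfrPz j * qfrPz m = if j = m then qfrPz j else 0 := by
  unfold qfrPz
  rw [smul_mul_smul_comm, ← Matrix.map_mul, qfrNz_mul]
  split
  · rw [qfr_map_smul, smul_smul]
    norm_num
  · simp

lemma qfrPz_sum : ∑ j, qfrPz j = 1 := by
  have φdef : ∀ M : Matrix (ZMod 4) (ZMod 4) ℤ,
      M.map (Int.castRingHom ℂ) = (Int.castRingHom ℂ).mapMatrix M := fun _ => rfl
  rw [Fin.sum_univ_three]
  unfold qfrPz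
  rw [← smul_add, ← smul_add, φdef, φdef, φdef, ← map_add, ← map_add, qfrNz_sum, ← φdef,
    qfr_map_smul, smul_smul]
  rw [show ((4:ℂ)⁻¹ * ((4:ℤ):ℂ)) = 1 from by norm_num, one_smul, φdef, _root_.map_one]

lemma qfrPz_comb : (2:ℂ) • qfrPz 0 + (0:ℂ) • qfrPz 1 + (-2:ℂ) • qfrPz 2 = qfrCc := by
  unfold qfrPz qfrCc
  rw [smul_smul, smul_smul, smul_smul]
  rw [show ((2:ℂ) * (4:ℂ)⁻¹) • (qfrNz 0).map (Int.castRingHom ℂ) +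
      ((0:ℂ) * (4:ℂ)⁻¹) • (qfrNz 1).map (Int.castRingHom ℂ) +
      ((-2:ℂ) * (4:ℂ)⁻¹) • (qfrNz 2).map (Int.castRingHom ℂ) =
      (4:ℂ)⁻¹ • ((2:ℂ) • (qfrNz 0).map (Int.castRingHom ℂ) +
        (0:ℂ) • (qfrNz 1).map (Int.castRingHom ℂ) +
        (-2:ℂ) • (qfrNz 2).map (Int.castRingHom ℂ)) from by
    rw [smul_add, smul_add, smul_smul, smul_smul, smul_smul]; ring_nf]
  rw [show (2:ℂ) • (qfrNz 0).map (Int.castRingHom ℂ) +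
        (0:ℂ) • (qfrNz 1).map (Int.castRingHom ℂ) +
        (-2:ℂ) • (qfrNz 2).map (Int.castRingHom ℂ) =
      ((2:ℤ) • qfrNz 0 + (0:ℤ) • qfrNz 1 + (-2:ℤ) • qfrNz 2).map (Int.castRingHom ℂ) from by
    rw [Matrix.map_add, Matrix.map_add, qfr_map_smul, qfr_map_smul, qfr_map_smul]
    · norm_num
    · exact fun a₁ a₂ => map_add (Int.castRingHom ℂ) a₁ a₂
    · exact fun a₁ a₂ => map_add (Int.castRingHom ℂ) a₁ a₂]
  rw [qfrNz_comb, qfr_map_smul, smul_smul]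
  rw [show ((4:ℂ)⁻¹ * ((4:ℤ):ℂ)) = 1 from by norm_num, one_smul]

variable {F : Type*} [Fintype F] [DecidableEq F]

/-- all-ones matrix -/
noncomputable def qfrJm (F : Type*) : Matrix F F ℂ := Matrix.of fun _ _ => 1

noncomputable def qfrQm (F : Type*) [Fintype F] [DecidableEq F] : Fin 2 → Matrix F F ℂ
  | 0 => ((Fintype.card F : ℂ))⁻¹ • qfrJm F
  | 1 => 1 - ((Fintype.card F : ℂ))⁻¹ • qfrJm F

set_option linter.unusedSectionVars false in
lemma qfrJm_mul_Jm : qfrJm F * qfrJm F = (Fintype.card F : ℂ) • qfrJm F := by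
  ext a b
  simp [qfrJm, Matrix.mul_apply, Finset.card_univ]

set_option linter.unusedSectionVars false in
lemma qfrQm_mul (hF : (Fintype.card F : ℂ) ≠ 0) (i l : Fin 2) :
    qfrQm F i * qfrQm F l = if i = l then qfrQm F i else 0 := by
  set K : Matrix F F ℂ := ((Fintype.card F : ℂ))⁻¹ • qfrJm F with hKdef
  have hK : K * K = K := by
    rw [hKdef, smul_mul_smul_comm, qfrJm_mul_Jm, smul_smul]
    congr 1
    field_simp
  have e0 : qfrQm F 0 = K := rfl
  have e1 : qfrQm F 1 = 1 - K := rfl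
  fin_cases i <;> fin_cases l
  · show qfrQm F 0 * qfrQm F 0 = if (0 : Fin 2) = 0 then qfrQm F 0 else 0
    rw [if_pos rfl, e0, hK]
  · show qfrQm F 0 * qfrQm F 1 = if (0 : Fin 2) = 1 then qfrQm F 0 else 0
    rw [if_neg (by decide), e0, e1, mul_sub, mul_one, hK, sub_self]
  · show qfrQm F 1 * qfrQm F 0 = if (1 : Fin 2) = 0 then qfrQm F 1 else 0
    rw [if_neg (by decide), e0, e1, sub_mul, one_mul, hK, sub_self]
  · show qfrQm F 1 * qfrQm F 1 = if (1 : Fin 2) = 1 then qfrQm F 1 else 0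
    rw [if_pos rfl, e1, sub_mul, one_mul, mul_sub, mul_one, hK, sub_self, sub_zero]

lemma qfrQm_sum : ∑ i, qfrQm F i = 1 := by
  rw [Fin.sum_univ_two]
  show ((Fintype.card F : ℂ))⁻¹ • qfrJm F + (1 - ((Fintype.card F : ℂ))⁻¹ • qfrJm F) = 1
  abel

/-- The spectral projections of the adjacency matrix of the unitary Cayley graph. -/
noncomputable def qfrPmat (F : Type*) [Fintype F] [DecidableEq F] (j : Fin 2 × Fin 3) :
    Matrix (F × ZMod 4) (F × ZMod 4) ℂ :=
  qfrQm F j.1 ⊗ₖ qfrPz j.2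

noncomputable def qfrMu (q : ℕ) : Fin 2 → ℂ
  | 0 => (q : ℂ) - 1
  | 1 => -1

noncomputable def qfrNu : Fin 3 → ℂ
  | 0 => 2
  | 1 => 0
  | 2 => -2

lemma qfr_zmod4_cases : ∀ d : ZMod 4, d = 0 ∨ d = 1 ∨ d = 2 ∨ d = 3 := by decide

lemma qfrPmat_mul (hF : (Fintype.card F : ℂ) ≠ 0) (j l : Fin 2 × Fin 3) :
    qfrPmat F j * qfrPmat F l = if j = l then qfrPmat F j else 0 := by
  unfold qfrPmat
  rw [← Matrix.mul_kronecker_mul, qfrQm_mul hF, qfrPz_mul]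
  by_cases h1 : j.1 = l.1 <;> by_cases h2 : j.2 = l.2
  · rw [if_pos h1, if_pos h2, if_pos (Prod.ext h1 h2)]
  · rw [if_pos h1, if_neg h2, if_neg (fun h => h2 (congrArg Prod.snd h)), Matrix.kronecker_zero]
  · rw [if_neg h1, if_pos h2, if_neg (fun h => h1 (congrArg Prod.fst h)), Matrix.zero_kronecker]
  · rw [if_neg h1, if_neg h2, if_neg (fun h => h1 (congrArg Prod.fst h)), Matrix.zero_kronecker]

lemma qfr_kron_sum_right {m n : Type*} [Fintype n] {ι : Type*} (s : Finset ι)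
    (A : Matrix m m ℂ) (f : ι → Matrix n n ℂ) :
    A ⊗ₖ (∑ i ∈ s, f i) = ∑ i ∈ s, A ⊗ₖ f i := by
  ext ⟨a, b⟩ ⟨c, d⟩
  simp [Matrix.kroneckerMap_apply, Matrix.sum_apply, Finset.mul_sum]

lemma qfr_sum_kron_left {m n : Type*} [Fintype n] {ι : Type*} (s : Finset ι)
    (f : ι → Matrix m m ℂ) (B : Matrix n n ℂ) :
    (∑ i ∈ s, f i) ⊗ₖ B = ∑ i ∈ s, f i ⊗ₖ B := by
  ext ⟨a, b⟩ ⟨c, d⟩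
  simp [Matrix.kroneckerMap_apply, Matrix.sum_apply, Finset.sum_mul]

lemma qfrPmat_sum : ∑ j, qfrPmat F j = 1 := by
  rw [Fintype.sum_prod_type]
  have : ∀ i : Fin 2, ∑ j : Fin 3, qfrPmat F (i, j) = qfrQm F i ⊗ₖ 1 := by
    intro i
    rw [← qfrPz_sum, qfr_kron_sum_right]
    rfl
  simp_rw [this]
  rw [← qfr_sum_kron_left, qfrQm_sum, Matrix.one_kronecker_one]

lemma qfr_zmod4_unit : ∀ d : ZMod 4, IsUnit d ↔ d = 1 ∨ d = 3 := by decide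

lemma qfr_prod_isUnit {M N : Type*} [CommMonoid M] [CommMonoid N] (x : M × N) :
    IsUnit x ↔ IsUnit x.1 ∧ IsUnit x.2 := by
  constructor
  · intro h
    exact ⟨h.map (MonoidHom.fst M N), h.map (MonoidHom.snd M N)⟩
  · rintro ⟨h1, h2⟩
    rw [isUnit_iff_exists_inv] at h1 h2 ⊢
    obtain ⟨b1, hb1⟩ := h1
    obtain ⟨b2, hb2⟩ := h2
    exact ⟨(b1, b2), Prod.ext hb1 hb2⟩

set_option linter.unusedSectionVars false in
lemma qfr_ucMatrix_eq (F : Type*) [Field F] [Fintype F] [DecidableEq F] :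
    ucMatrix (F × ZMod 4) = (qfrJm F - 1) ⊗ₖ qfrCc := by
  classical
  ext x y
  obtain ⟨a1, a2⟩ := x
  obtain ⟨b1, b2⟩ := y
  rw [Matrix.kroneckerMap_apply]
  rw [show ucMatrix (F × ZMod 4) (a1, a2) (b1, b2) =
      if ((a1, a2) ≠ (b1, b2) ∧ IsUnit ((a1, a2) - (b1, b2))) then (1:ℂ) else 0 from by
    unfold ucMatrix
    rw [SimpleGraph.adjMatrix_apply]
    exact if_congr (by exact Iff.rfl) rfl rfl]
  have hsub : ((a1, a2) - (b1, b2) : F × ZMod 4) = (a1 - b1, a2 - b2) := rfl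
  by_cases h1 : a1 = b1
  · subst h1
    rw [if_neg]
    · have : (qfrJm F - 1) a1 a1 = 0 := by
        simp [qfrJm, Matrix.sub_apply, Matrix.one_apply]
      rw [this, zero_mul]
    · rintro ⟨-, hu⟩
      rw [hsub, qfr_prod_isUnit] at hu
      exact (by simpa using hu.1 : IsUnit (0 : F)).ne_zero rfl |>.elim
  · have hJ : (qfrJm F - 1) a1 b1 = 1 := by
      simp [qfrJm, Matrix.sub_apply, Matrix.one_apply, h1]
    rw [hJ, one_mul]
    have hCc : qfrCc a2 b2 = if a2 - b2 = 1 ∨ a2 - b2 = 3 then (1:ℂ) else 0 := by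
      unfold qfrCc qfrCz
      simp [Matrix.map_apply, apply_ite (Int.cast : ℤ → ℂ)]
    rw [hCc]
    by_cases h2 : a2 - b2 = 1 ∨ a2 - b2 = 3
    · rw [if_pos h2, if_pos]
      refine ⟨fun h => h1 (congrArg Prod.fst h), ?_⟩
      rw [hsub, qfr_prod_isUnit]
      exact ⟨isUnit_iff_ne_zero.2 (sub_ne_zero.2 h1), (qfr_zmod4_unit _).2 h2⟩
    · rw [if_neg h2, if_neg]
      rintro ⟨-, hu⟩
      rw [hsub, qfr_prod_isUnit] at hu
      exact h2 ((qfr_zmod4_unit _).1 hu.2)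

lemma qfr_ucMatrix_decomp (F : Type*) [Field F] [Fintype F] [DecidableEq F] :
    ucMatrix (F × ZMod 4) =
      ∑ j : Fin 2 × Fin 3, (qfrMu (Fintype.card F) j.1 * qfrNu j.2) • qfrPmat F j := by
  have hq : (Fintype.card F : ℂ) ≠ 0 := Nat.cast_ne_zero.2 Fintype.card_ne_zero
  have hQ : ∑ i : Fin 2, qfrMu (Fintype.card F) i • qfrQm F i = qfrJm F - 1 := by
    rw [Fin.sum_univ_two]
    show ((Fintype.card F : ℂ) - 1) • ((Fintype.card F : ℂ))⁻¹ • qfrJm F +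
      (-1 : ℂ) • (1 - ((Fintype.card F : ℂ))⁻¹ • qfrJm F) = qfrJm F - 1
    ext a b
    simp only [Matrix.add_apply, Matrix.smul_apply, Matrix.sub_apply, Matrix.one_apply,
      qfrJm, Matrix.of_apply, smul_eq_mul]
    split_ifs <;> field_simp <;> ring
  have hC : ∑ j : Fin 3, qfrNu j • qfrPz j = qfrCc := by
    rw [Fin.sum_univ_three]
    exact qfrPz_comb
  rw [qfr_ucMatrix_eq, ← hQ, ← hC, qfr_sum_kron_left, Fintype.sum_prod_type]
  refine Finset.sum_congr rfl fun i _ => ?_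
  rw [qfr_kron_sum_right]
  refine Finset.sum_congr rfl fun j _ => ?_
  rw [Matrix.smul_kronecker, Matrix.kronecker_smul, smul_smul]
  rfl

/-- the three entry values of `H(kπ/q)` as a function of the `ZMod 4` difference -/
noncomputable def qfrM (z : ℂ) : ZMod 4 → ℂ := fun d =>
  if d = 0 then (z + z⁻¹ + 2) / 4 else if d = 2 then (z + z⁻¹ - 2) / 4 else (z⁻¹ - z) / 4

lemma qfr_exp_eq1 (n : ℕ) (hn : (n : ℂ) ≠ 0) (k : ℤ) :
    Complex.exp (Complex.I * (((k : ℝ) * Real.pi / n : ℝ) : ℂ) * (((n:ℂ) - 1) * 2)) =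
      (Complex.exp (2 * (Real.pi:ℂ) * Complex.I * (k:ℂ) / (n:ℂ)))⁻¹ := by
  rw [show Complex.I * (((k : ℝ) * Real.pi / n : ℝ) : ℂ) * (((n:ℂ) - 1) * 2) =
      (k:ℂ) * (2 * (Real.pi:ℂ) * Complex.I) - 2 * (Real.pi:ℂ) * Complex.I * (k:ℂ) / (n:ℂ) from by
    push_cast
    field_simp]
  rw [Complex.exp_sub, Complex.exp_int_mul_two_pi_mul_I, one_div]

lemma qfr_exp_eq2 (n : ℕ) (hn : (n : ℂ) ≠ 0) (k : ℤ) :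
    Complex.exp (Complex.I * (((k : ℝ) * Real.pi / n : ℝ) : ℂ) * (((n:ℂ) - 1) * -2)) =
      Complex.exp (2 * (Real.pi:ℂ) * Complex.I * (k:ℂ) / (n:ℂ)) := by
  rw [show Complex.I * (((k : ℝ) * Real.pi / n : ℝ) : ℂ) * (((n:ℂ) - 1) * -2) =
      2 * (Real.pi:ℂ) * Complex.I * (k:ℂ) / (n:ℂ) + ((-k:ℤ):ℂ) * (2 * (Real.pi:ℂ) * Complex.I) from by
    push_cast
    field_simp
    ring]
  rw [Complex.exp_add, Complex.exp_int_mul_two_pi_mul_I, mul_one]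

lemma qfr_exp_eq3 (n : ℕ) (hn : (n : ℂ) ≠ 0) (k : ℤ) :
    Complex.exp (Complex.I * (((k : ℝ) * Real.pi / n : ℝ) : ℂ) * ((-1) * 2)) =
      (Complex.exp (2 * (Real.pi:ℂ) * Complex.I * (k:ℂ) / (n:ℂ)))⁻¹ := by
  rw [show Complex.I * (((k : ℝ) * Real.pi / n : ℝ) : ℂ) * ((-1) * 2) =
      -(2 * (Real.pi:ℂ) * Complex.I * (k:ℂ) / (n:ℂ)) from by
    push_cast
    ring]
  rw [Complex.exp_neg]

lemma qfr_exp_eq4 (n : ℕ) (hn : (n : ℂ) ≠ 0) (k : ℤ) :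
    Complex.exp (Complex.I * (((k : ℝ) * Real.pi / n : ℝ) : ℂ) * ((-1) * -2)) =
      Complex.exp (2 * (Real.pi:ℂ) * Complex.I * (k:ℂ) / (n:ℂ)) := by
  congr 1
  push_cast
  field_simp

set_option linter.unusedSectionVars false in
/-- the key entry formula for the transition matrix at time `kπ/q`. -/
lemma qfr_entry (F : Type*) [Field F] [Fintype F] [DecidableEq F] (k : ℤ) (u w : F × ZMod 4) :
    transMatrix (ucMatrix (F × ZMod 4)) ((k : ℝ) * Real.pi / (Fintype.card F)) w u =
      (if w.1 = u.1 then 1 else 0) *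
        qfrM (Complex.exp (2 * (Real.pi:ℂ) * Complex.I * (k:ℂ) / (Fintype.card F : ℂ)))
          (w.2 - u.2) := by
  have hn0 : (Fintype.card F : ℂ) ≠ 0 := Nat.cast_ne_zero.2 Fintype.card_ne_zero
  have hH : transMatrix (ucMatrix (F × ZMod 4)) ((k : ℝ) * Real.pi / (Fintype.card F)) =
      ∑ j : Fin 2 × Fin 3,
        Complex.exp (Complex.I * ((((k : ℝ) * Real.pi / (Fintype.card F) : ℝ)) : ℂ) *
          (qfrMu (Fintype.card F) j.1 * qfrNu j.2)) • qfrPmat F j := by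
    unfold transMatrix
    have hinst : Classical.decEq (F × ZMod 4) = instDecidableEqProd := by
      funext a b
      exact Subsingleton.elim _ _
    rw [hinst]
    refine qfr_exp_proj _ _ _ (qfrPmat_mul hn0) qfrPmat_sum ?_
    rw [qfr_ucMatrix_decomp F, Finset.smul_sum]
    refine Finset.sum_congr rfl fun j _ => ?_
    rw [smul_smul]
  rw [hH, Matrix.sum_apply]
  simp only [Matrix.smul_apply, smul_eq_mul, qfrPmat, Matrix.kroneckerMap_apply]
  rw [Fintype.sum_prod_type, Fin.sum_univ_two, Fin.sum_univ_three, Fin.sum_univ_three]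
  simp only [qfrMu, qfrNu]
  rw [qfr_exp_eq1 _ hn0, qfr_exp_eq2 _ hn0, qfr_exp_eq3 _ hn0, qfr_exp_eq4 _ hn0]
  rw [show (((Fintype.card F : ℕ):ℂ) - 1) * 0 = 0 from by ring,
    show ((-1 : ℂ)) * 0 = 0 from by ring]
  have hQ0 : qfrQm F 0 w.1 u.1 = ((Fintype.card F : ℕ):ℂ)⁻¹ := by
    show (((Fintype.card F : ℕ):ℂ)⁻¹ • qfrJm F) w.1 u.1 = _
    simp [qfrJm]
  have hQ1 : qfrQm F 1 w.1 u.1 = (if w.1 = u.1 then 1 else 0) - ((Fintype.card F : ℕ):ℂ)⁻¹ := by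
    show ((1 : Matrix F F ℂ) - ((Fintype.card F : ℕ):ℂ)⁻¹ • qfrJm F) w.1 u.1 = _
    simp [qfrJm, Matrix.sub_apply, Matrix.one_apply]
  have hPz : ∀ j : Fin 3, qfrPz j w.2 u.2 = (4:ℂ)⁻¹ * ((qfrNz j w.2 u.2 : ℤ) : ℂ) := by
    intro j
    simp [qfrPz, Matrix.map_apply]
  rw [hQ0, hQ1, hPz, hPz, hPz]
  simp only [qfrNz, Matrix.of_apply, qfrM]
  rcases qfr_zmod4_cases (w.2 - u.2) with h|h|h|h <;> rw [h] <;>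
    simp (config := { decide := true }) only [mul_zero, zero_mul, Complex.exp_zero,
      if_true, if_false, or_self, or_false, false_or, true_or, or_true] <;>
    split_ifs <;> first
      | contradiction
      | (push_cast; ring)

end Aux

/-- for a finite field `F` of odd cardinality `q`, the unitary Cayley graph
of `F × ℤ/4` has no QFR at any time `kπ/q`, `k ∈ ℤ`. -/
theorem no_qfr_field_times_zmod_four (F : Type*) [Field F] [Fintype F] (q : ℕ)
    (hq : Fintype.card F = q) (hodd : Odd q) (k : ℤ) (u v : F × ZMod 4) :
    ¬ hasQFR (ucMatrix (F × ZMod 4)) u v ((k : ℝ) * Real.pi / q) := by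
  classical
  subst hq
  rintro ⟨huv, α, β, hβ, heq⟩
  have hn0 : (Fintype.card F : ℂ) ≠ 0 := Nat.cast_ne_zero.2 Fintype.card_ne_zero
  set ζ : ℂ := Complex.exp (2 * (Real.pi:ℂ) * Complex.I * (k:ℂ) / (Fintype.card F : ℂ)) with hζ
  have hζ0 : ζ ≠ 0 := Complex.exp_ne_zero _
  have hζq : ζ ^ (Fintype.card F) = 1 := by
    rw [hζ, ← Complex.exp_nat_mul]
    rw [show (Fintype.card F : ℂ) * (2 * (Real.pi:ℂ) * Complex.I * (k:ℂ) / (Fintype.card F : ℂ))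
        = (k:ℂ) * (2 * (Real.pi:ℂ) * Complex.I) from by field_simp]
    exact Complex.exp_int_mul_two_pi_mul_I k
  have hζm1 : ζ ≠ -1 := by
    intro h
    rw [h, Odd.neg_one_pow hodd] at hζq
    norm_num at hζq
  have hmv : ∀ w : F × ZMod 4,
      (transMatrix (ucMatrix (F × ZMod 4)) ((k:ℝ) * Real.pi / (Fintype.card F)) *ᵥ stdVec u) w =
      (if w.1 = u.1 then 1 else 0) * qfrM ζ (w.2 - u.2) := by
    intro w
    have h1 : (transMatrix (ucMatrix (F × ZMod 4)) ((k:ℝ) * Real.pi / (Fintype.card F))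
        *ᵥ stdVec u) w
        = transMatrix (ucMatrix (F × ZMod 4)) ((k:ℝ) * Real.pi / (Fintype.card F)) w u := by
      letI : DecidableEq (F × ZMod 4) := Classical.decEq _
      show dotProduct _ (stdVec u) = _
      unfold stdVec
      rw [dotProduct_single, mul_one]
    rw [h1, qfr_entry, ← hζ]
  have hself : ∀ x : F × ZMod 4, stdVec x x = 1 := by
    intro x
    letI : DecidableEq (F × ZMod 4) := Classical.decEq _
    unfold stdVec
    exact Pi.single_eq_same x 1
  have hsvne : ∀ (x w : F × ZMod 4), w ≠ x → stdVec x w = 0 := by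
    intro x w hw
    letI : DecidableEq (F × ZMod 4) := Classical.decEq _
    unfold stdVec
    exact Pi.single_eq_of_ne hw 1
  by_cases hz1 : ζ = 1
  · -- trivial transition: the value at `v` is zero, so `β = 0`
    have hv := congrFun heq v
    rw [hmv v] at hv
    simp only [Pi.add_apply, Pi.smul_apply, smul_eq_mul] at hv
    rw [hself v, hsvne u v (Ne.symm huv), mul_zero, mul_one, zero_add] at hv
    have hzero : (if v.1 = u.1 then (1:ℂ) else 0) * qfrM ζ (v.2 - u.2) = 0 := by
      by_cases h1 : v.1 = u.1
      · rw [if_pos h1, one_mul]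
        have h2 : v.2 - u.2 ≠ 0 := by
          rw [sub_ne_zero]
          intro h2
          exact huv (Prod.ext h1 h2).symm
        rcases qfr_zmod4_cases (v.2 - u.2) with h|h|h|h
        · exact absurd h h2
        all_goals rw [h, hz1]; unfold qfrM
        · rw [if_neg (by decide), if_neg (by decide)]; norm_num
        · rw [if_neg (by decide), if_pos (by decide)]; norm_num
        · rw [if_neg (by decide), if_neg (by decide)]; norm_num
      · rw [if_neg h1, zero_mul]
    exact hβ (hv.symm.trans hzero)
  · -- nontrivial case: four nonzero entries in the column
    have hζsq : ζ * ζ ≠ 1 := by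
      intro h
      have hfac : (ζ - 1) * (ζ + 1) = 0 := by linear_combination h
      rcases mul_eq_zero.mp hfac with h' | h'
      · exact hz1 (sub_eq_zero.mp h')
      · exact hζm1 (eq_neg_of_add_eq_zero_left h')
    have hm : (ζ⁻¹ - ζ) / 4 ≠ 0 := by
      intro h
      rw [div_eq_zero_iff] at h
      rcases h with h | h
      · have h' : ζ⁻¹ = ζ := sub_eq_zero.mp h
        apply hζsq
        calc ζ * ζ = ζ * ζ⁻¹ := by rw [h']
        _ = 1 := mul_inv_cancel₀ hζ0
      · norm_num at h
    have hzfacts : ∀ z : ZMod 4, z + 1 ≠ z ∧ z + 3 ≠ z ∧ z + 1 ≠ z + 3 := by decide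
    set w1 : F × ZMod 4 := (u.1, u.2 + 1) with hw1
    set w3 : F × ZMod 4 := (u.1, u.2 + 3) with hw3
    have hw1u : w1 ≠ u := fun h => (hzfacts u.2).1 (congrArg Prod.snd h)
    have hw3u : w3 ≠ u := fun h => (hzfacts u.2).2.1 (congrArg Prod.snd h)
    have hw13 : w1 ≠ w3 := fun h => (hzfacts u.2).2.2 (congrArg Prod.snd h)
    have hval : ∀ w : F × ZMod 4, w.1 = u.1 → (w.2 - u.2 = 1 ∨ w.2 - u.2 = 3) →
        (transMatrix (ucMatrix (F × ZMod 4)) ((k:ℝ) * Real.pi / (Fintype.card F))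
          *ᵥ stdVec u) w = (ζ⁻¹ - ζ) / 4 := by
      intro w h1 h2
      rw [hmv w, if_pos h1, one_mul]
      rcases h2 with h | h <;> rw [h] <;> unfold qfrM <;>
        rw [if_neg (by decide), if_neg (by decide)]
    by_cases hvw : v = w1
    · have h3 := congrFun heq w3
      rw [hval w3 rfl (Or.inr (by show u.2 + 3 - u.2 = 3; ring))] at h3
      simp only [Pi.add_apply, Pi.smul_apply, smul_eq_mul] at h3
      rw [hsvne u w3 hw3u, hsvne v w3 (by rw [hvw]; exact hw13.symm), mul_zero, mul_zero,
        add_zero] at h3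
      exact hm h3
    · have h3 := congrFun heq w1
      rw [hval w1 rfl (Or.inl (by show u.2 + 1 - u.2 = 1; ring))] at h3
      simp only [Pi.add_apply, Pi.smul_apply, smul_eq_mul] at h3
      rw [hsvne u w1 hw1u, hsvne v w1 (fun h => hvw (h.symm)), mul_zero, mul_zero,
        add_zero] at h3
      exact hm h3
end

section
/- Let A be the adjacency matrix of the unitary Cayley graph of ℤ/4ℤ (the 4-cycle, with a adjacent to b iff a − b ≡ ±1 mod 4), regarded over ℂ. Then for every t ∈ ℝ and all j, k ∈ ℤ/4ℤ, the (j,k) entry of exp(itA) equals cos²(t) if j = k, equals i·sin(t)·cos(t) if j − k ≡ ±1 (mod 4), and equals −sin²(t) if j − k ≡ 2 (mod 4). -/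
open Matrix

/- Auxiliary machinery: DFT diagonalization of the 4-cycle adjacency matrix. -/

noncomputable def Umat : Matrix (ZMod 4) (ZMod 4) ℂ := fun j k => Complex.I ^ (j.val * k.val)
noncomputable def Vmat : Matrix (ZMod 4) (ZMod 4) ℂ :=
  fun j k => (1/4 : ℂ) * (-Complex.I) ^ (j.val * k.val)
noncomputable def dvec (t : ℝ) : ZMod 4 → ℂ := fun m =>
  if m.val = 0 then Complex.I * t * 2 else if m.val = 2 then -(Complex.I * t * 2) else 0

lemma sum_zmod4 (f : ZMod 4 → ℂ) : ∑ m, f m = f 0 + f 1 + f 2 + f 3 :=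
  Fin.sum_univ_four f
lemma v0 : (0 : ZMod 4).val = 0 := rfl
lemma v1 : (1 : ZMod 4).val = 1 := rfl
lemma v2 : (2 : ZMod 4).val = 2 := rfl
lemma v3 : (3 : ZMod 4).val = 3 := rfl
lemma zmod4_cases (j : ZMod 4) : j = 0 ∨ j = 1 ∨ j = 2 ∨ j = 3 := by
  revert j; decide
lemma d0 (t : ℝ) : dvec t 0 = Complex.I * t * 2 := rfl
lemma d1 (t : ℝ) : dvec t 1 = 0 := rfl
lemma d2 (t : ℝ) : dvec t 2 = -(Complex.I * t * 2) := rfl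
lemma d3 (t : ℝ) : dvec t 3 = 0 := rfl

lemma hUV : Umat * Vmat = 1 := by
  ext j k
  rw [Matrix.mul_apply, sum_zmod4]
  rcases zmod4_cases j with rfl | rfl | rfl | rfl <;>
    rcases zmod4_cases k with rfl | rfl | rfl | rfl <;>
    simp [Umat, Vmat, Matrix.one_apply, v0, v1, v2, v3, pow_succ, mul_assoc,
      Complex.I_mul_I] <;> ring_nf <;> norm_num [Complex.I_sq] <;> decide

lemma hVU : Vmat * Umat = 1 := by
  ext j k
  rw [Matrix.mul_apply, sum_zmod4]
  rcases zmod4_cases j with rfl | rfl | rfl | rfl <;>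
    rcases zmod4_cases k with rfl | rfl | rfl | rfl <;>
    simp [Umat, Vmat, Matrix.one_apply, v0, v1, v2, v3, pow_succ, mul_assoc,
      Complex.I_mul_I] <;> ring_nf <;> norm_num [Complex.I_sq] <;> decide

noncomputable def Uunit : (Matrix (ZMod 4) (ZMod 4) ℂ)ˣ := ⟨Umat, Vmat, hUV, hVU⟩

lemma adj_iff (a b : ZMod 4) :
    (unitaryCayleyGraph (ZMod 4)).Adj a b ↔ (a - b = 1 ∨ a - b = 3) :=
  by exact (by decide : ∀ a b : ZMod 4, ((a ≠ b ∧ IsUnit (a - b)) ↔ (a - b = 1 ∨ a - b = 3))) a b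

lemma uc1 {a b : ZMod 4} (h : a - b = 1 ∨ a - b = 3) : ucMatrix (ZMod 4) a b = 1 := by
  unfold ucMatrix
  rw [SimpleGraph.adjMatrix_apply, if_pos ((adj_iff a b).2 h)]

lemma uc0 {a b : ZMod 4} (h : ¬(a - b = 1 ∨ a - b = 3)) : ucMatrix (ZMod 4) a b = 0 := by
  unfold ucMatrix
  rw [SimpleGraph.adjMatrix_apply, if_neg (fun hadj => h ((adj_iff a b).1 hadj))]

lemma scaled_eq (t : ℝ) :
    (Complex.I * (t : ℂ)) • ucMatrix (ZMod 4) = Umat * Matrix.diagonal (dvec t) * Vmat := by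
  ext j k
  rw [Matrix.smul_apply, Matrix.mul_apply, sum_zmod4]
  rcases zmod4_cases j with rfl | rfl | rfl | rfl <;>
    rcases zmod4_cases k with rfl | rfl | rfl | rfl <;>
    (first | rw [uc1 (by decide)] | rw [uc0 (by decide)]) <;>
    simp [Umat, Vmat, dvec, Matrix.mul_diagonal, v0, v1, v2, v3, pow_succ, mul_assoc,
      Complex.I_mul_I] <;> ring_nf <;> norm_num [Complex.I_sq] <;> ring

lemma key (t : ℝ) : transMatrix (ucMatrix (ZMod 4)) t =
    Umat * Matrix.diagonal (fun m => Complex.exp (dvec t m)) * Vmat := by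
  unfold transMatrix
  rw [scaled_eq]
  have h : NormedSpace.exp (Umat * Matrix.diagonal (dvec t) * Vmat)
      = Umat * NormedSpace.exp (Matrix.diagonal (dvec t)) * Vmat :=
    Matrix.exp_units_conj Uunit _
  have e : (Classical.decEq (ZMod 4)) = (inferInstance : DecidableEq (ZMod 4)) :=
    Subsingleton.elim _ _
  rw [e, h, Matrix.exp_diagonal]
  congr 2
  simp [Pi.exp_def, Complex.exp_eq_exp_ℂ]

set_option maxHeartbeats 2000000 in
/-- entries of the transition matrix of the unitary Cayley graph of `ℤ/4`:
`cos² t` on the diagonal, `i sin t cos t` for `j - k ≡ ±1`, `-sin² t` for `j - k ≡ 2`. -/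
theorem transition_matrix_zmod_four (t : ℝ) (j k : ZMod 4) :
    (j = k → transMatrix (ucMatrix (ZMod 4)) t j k = ((Real.cos t : ℂ)) ^ 2) ∧
    (j - k = 1 ∨ j - k = -1 →
      transMatrix (ucMatrix (ZMod 4)) t j k =
        Complex.I * (Real.sin t : ℂ) * (Real.cos t : ℂ)) ∧
    (j - k = 2 → transMatrix (ucMatrix (ZMod 4)) t j k = -((Real.sin t : ℂ)) ^ 2) := by
  have hE : Complex.exp (Complex.I * (↑t * 2)) = Complex.exp (↑t * Complex.I) ^ 2 := by
    rw [sq, ← Complex.exp_add]; ring_nf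
  refine ⟨fun h => ?_, fun h => ?_, fun h => ?_⟩
  · rw [key, Matrix.mul_apply, sum_zmod4]
    rcases zmod4_cases j with rfl | rfl | rfl | rfl <;>
    rcases zmod4_cases k with rfl | rfl | rfl | rfl <;> first
      | (exfalso; have h2 := congrArg (ZMod.val (n := 4)) h; revert h2; decide)
      | (simp [Matrix.mul_diagonal, Umat, Vmat, d0, d1, d2, d3, v0, v1, v2, v3, pow_succ,
           mul_assoc, Complex.I_mul_I, Complex.ofReal_cos, Complex.cos, Complex.exp_zero,
           Complex.exp_neg]
         try rw [hE]
         try field_simp [Complex.exp_ne_zero]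
         try ring_nf
         try norm_num [Complex.I_sq]
         try ring)
  · rw [key, Matrix.mul_apply, sum_zmod4]
    rcases zmod4_cases j with rfl | rfl | rfl | rfl <;>
    rcases zmod4_cases k with rfl | rfl | rfl | rfl <;> first
      | (exfalso; rcases h with h | h <;>
          (have h2 := congrArg (ZMod.val (n := 4)) h; revert h2; decide))
      | (simp [Matrix.mul_diagonal, Umat, Vmat, d0, d1, d2, d3, v0, v1, v2, v3, pow_succ,
           mul_assoc, Complex.I_mul_I, Complex.ofReal_cos, Complex.ofReal_sin, Complex.cos,
           Complex.sin, Complex.exp_zero, Complex.exp_neg]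
         try rw [hE]
         try field_simp [Complex.exp_ne_zero]
         try ring_nf
         try norm_num [Complex.I_sq]
         try ring)
  · rw [key, Matrix.mul_apply, sum_zmod4]
    rcases zmod4_cases j with rfl | rfl | rfl | rfl <;>
    rcases zmod4_cases k with rfl | rfl | rfl | rfl <;> first
      | (exfalso; have h2 := congrArg (ZMod.val (n := 4)) h; revert h2; decide)
      | (simp [Matrix.mul_diagonal, Umat, Vmat, d0, d1, d2, d3, v0, v1, v2, v3, pow_succ,
           mul_assoc, Complex.I_mul_I, Complex.ofReal_sin, Complex.sin, Complex.exp_zero,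
           Complex.exp_neg]
         try rw [hE]
         try field_simp [Complex.exp_ne_zero]
         try ring_nf
         try norm_num [Complex.I_sq]
         try ring)
end

section
/- Let q ≥ 3 be an odd integer and let A be the adjacency matrix of the unitary Cayley graph of ℤ/4ℤ (the 4-cycle), regarded over ℂ. Then for t ∈ ℝ, exp(i·(q−1)·t·A) = exp(i·(−1)·t·A) if and only if t = kπ/q for some integer k. -/
open Matrix

/- ### auxiliary material -/

lemma zmod4_cases_s17 (P : ZMod 4 → Prop) (h0 : P 0) (h1 : P 1) (h2 : P 2) (h3 : P 3) :
    ∀ i, P i := fun i =>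
  match i with
  | ⟨0, _⟩ => h0
  | ⟨1, _⟩ => h1
  | ⟨2, _⟩ => h2
  | ⟨3, _⟩ => h3

noncomputable def Mm : Matrix (ZMod 4) (ZMod 4) ℂ :=
  fun i j => !![1,1,1,0; 1,-1,0,1; 1,1,-1,0; 1,-1,0,-1] i j

noncomputable def Nm : Matrix (ZMod 4) (ZMod 4) ℂ :=
  fun i j => !![1/4,1/4,1/4,1/4; 1/4,-1/4,1/4,-1/4; 1/2,0,-1/2,0; 0,1/2,0,-1/2] i j

noncomputable def dd : ZMod 4 → ℂ := fun i => ![2,-2,0,0] i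

lemma sum4 (f : ZMod 4 → ℂ) : ∑ i, f i = f 0 + f 1 + f 2 + f 3 := by
  exact Fin.sum_univ_four f

lemma zof {α : Type*} (M : Fin 4 → Fin 4 → α) (i j : ZMod 4) :
    (of M : Matrix (Fin 4) (Fin 4) α) i j = M i j := rfl
lemma zv0 {α : Type*} (a b c d : α) : ![a, b, c, d] (0 : ZMod 4) = a := rfl
lemma zv1 {α : Type*} (a b c d : α) : ![a, b, c, d] (1 : ZMod 4) = b := rfl
lemma zv2 {α : Type*} (a b c d : α) : ![a, b, c, d] (2 : ZMod 4) = c := rfl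
lemma zv3 {α : Type*} (a b c d : α) : ![a, b, c, d] (3 : ZMod 4) = d := rfl

lemma hMN : Mm * Nm = 1 := by
  ext i j
  rw [mul_apply, sum4]
  revert i j
  refine zmod4_cases_s17 _ ?_ ?_ ?_ ?_ <;> refine zmod4_cases_s17 _ ?_ ?_ ?_ ?_ <;>
    simp +decide [Mm, Nm, one_apply, vecHead, vecTail, zof, zv0, zv1, zv2, zv3] <;> norm_num

lemma hNM : Nm * Mm = 1 := by
  ext i j
  rw [mul_apply, sum4]
  revert i j
  refine zmod4_cases_s17 _ ?_ ?_ ?_ ?_ <;> refine zmod4_cases_s17 _ ?_ ?_ ?_ ?_ <;>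
    simp +decide [Mm, Nm, one_apply, vecHead, vecTail, zof, zv0, zv1, zv2, zv3] <;> norm_num

noncomputable def Uu : (Matrix (ZMod 4) (ZMod 4) ℂ)ˣ := ⟨Mm, Nm, hMN, hNM⟩

lemma hA : ucMatrix (ZMod 4) = Mm * diagonal dd * Nm := by
  have h1 : ucMatrix (ZMod 4) =
      (fun i j => !![0,1,0,1; 1,0,1,0; 0,1,0,1; 1,0,1,0] i j : Matrix (ZMod 4) (ZMod 4) ℂ) := by
    refine Matrix.ext ?_
    refine zmod4_cases_s17 _ ?_ ?_ ?_ ?_ <;> refine zmod4_cases_s17 _ ?_ ?_ ?_ ?_ <;>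
      rw [ucMatrix, SimpleGraph.adjMatrix_apply] <;>
      simp +decide [unitaryCayleyGraph, vecHead, vecTail, zof, zv0, zv1, zv2, zv3]
  rw [h1]
  ext i j
  rw [mul_apply, sum4]
  revert i j
  refine zmod4_cases_s17 _ ?_ ?_ ?_ ?_ <;> refine zmod4_cases_s17 _ ?_ ?_ ?_ ?_ <;>
    simp [Mm, Nm, dd, mul_apply, sum4, diagonal, vecHead, vecTail, zof, zv0, zv1, zv2, zv3] <;> norm_num

lemma htrans (s : ℝ) :
    transMatrix (ucMatrix (ZMod 4)) s =
      Mm * diagonal (fun i => Complex.exp (Complex.I * s * dd i)) * Nm := by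
  unfold transMatrix
  rw [hA]
  have hsm : (Complex.I * (s : ℂ)) • (Mm * diagonal dd * Nm) =
      Mm * diagonal (fun i => Complex.I * s * dd i) * Nm := by
    rw [show (fun i => Complex.I * (s:ℂ) * dd i) = (Complex.I * (s:ℂ)) • dd from rfl,
      diagonal_smul, Matrix.mul_smul, Matrix.smul_mul]
  rw [hsm]
  have := Matrix.exp_units_conj Uu (diagonal (fun i => Complex.I * s * dd i))
  have hU : (Uu : Matrix (ZMod 4) (ZMod 4) ℂ) = Mm := rfl
  have hU' : ((Uu⁻¹ : (Matrix (ZMod 4) (ZMod 4) ℂ)ˣ) : Matrix (ZMod 4) (ZMod 4) ℂ) = Nm := rfl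
  rw [hU, hU'] at this
  rw [Matrix.exp_diagonal] at this
  convert this using 4
  · rfl
  · rfl
  funext i
  rw [Pi.exp_def, Complex.exp_eq_exp_ℂ]

lemma conj_cancel (X Y : Matrix (ZMod 4) (ZMod 4) ℂ) (h : Mm * X * Nm = Mm * Y * Nm) :
    X = Y := by
  have h2 := congrArg (fun Z => Nm * Z * Mm) h
  calc X = (Nm * Mm) * X * (Nm * Mm) := by rw [hNM, Matrix.one_mul, Matrix.mul_one]
    _ = Nm * (Mm * X * Nm) * Mm := by simp only [Matrix.mul_assoc]
    _ = Nm * (Mm * Y * Nm) * Mm := h2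
    _ = (Nm * Mm) * Y * (Nm * Mm) := by simp only [Matrix.mul_assoc]
    _ = Y := by rw [hNM, Matrix.one_mul, Matrix.mul_one]


/-- for odd `q ≥ 3` and the adjacency matrix `A` of the unitary Cayley
graph of `ℤ/4`, `exp(i(q-1)tA) = exp(i(-1)tA)` iff `t = kπ/q` for some integer `k`. -/
theorem exp_eq_iff_time_zmod_four (q : ℕ) (hq : 3 ≤ q) (hodd : Odd q) (t : ℝ) :
    transMatrix (ucMatrix (ZMod 4)) (((q : ℝ) - 1) * t) =
        transMatrix (ucMatrix (ZMod 4)) ((-1 : ℝ) * t) ↔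
      ∃ k : ℤ, t = (k : ℝ) * Real.pi / q := by
  have hq0 : (q : ℝ) ≠ 0 := by
    have : 0 < q := by omega
    positivity
  have hq0' : (q : ℂ) ≠ 0 := by exact_mod_cast (by exact_mod_cast hq0 : (q:ℂ) ≠ 0)
  rw [htrans, htrans]
  constructor
  · intro h
    have hD := conj_cancel _ _ h
    have hf := congrFun (Matrix.diagonal_injective hD) 0
    have hdd0 : dd 0 = 2 := rfl
    rw [hdd0, Complex.exp_eq_exp_iff_exists_int] at hf
    obtain ⟨n, hn⟩ := hf
    have h3 : ((((q:ℝ)-1) * t * 2 : ℝ) : ℂ) = ((-1*t*2 + n*(2*Real.pi) : ℝ) : ℂ) := by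
      apply mul_left_cancel₀ Complex.I_ne_zero
      push_cast at hn ⊢
      linear_combination hn
    have h4 := Complex.ofReal_inj.mp h3
    refine ⟨n, ?_⟩
    field_simp
    nlinarith [h4, Real.pi_pos]
  · rintro ⟨k, hk⟩
    subst hk
    refine congrArg (fun D => Mm * D * Nm) ?_
    refine congrArg diagonal (funext ?_)
    refine zmod4_cases_s17 _ ?_ ?_ ?_ ?_
    · show Complex.exp (Complex.I * _ * dd 0) = Complex.exp (Complex.I * _ * dd 0)
      rw [show dd 0 = 2 from rfl, Complex.exp_eq_exp_iff_exists_int]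
      refine ⟨k, ?_⟩
      push_cast
      field_simp
      ring
    · show Complex.exp (Complex.I * _ * dd 1) = Complex.exp (Complex.I * _ * dd 1)
      rw [show dd 1 = -2 from rfl, Complex.exp_eq_exp_iff_exists_int]
      refine ⟨-k, ?_⟩
      push_cast
      field_simp
      ring
    · show Complex.exp (Complex.I * _ * dd 2) = Complex.exp (Complex.I * _ * dd 2)
      rw [show dd 2 = 0 from rfl, mul_zero, mul_zero]
    · show Complex.exp (Complex.I * _ * dd 3) = Complex.exp (Complex.I * _ * dd 3)
      rw [show dd 3 = 0 from rfl, mul_zero, mul_zero]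
end
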